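/- arXiv:1207.3684 — 6 statements merged into one kernel-verified Lean document; each statement's English description precedes it below -/
import Mathlib

section
/- Let R be a commutative ring with 1, let M be a free R-module of rank n ≥ 1, let r ≥ 1, and let f : M → M be an R-linear endomorphism. Then the induced R-linear endomorphism Sym^r(f) of the r-th symmetric power Sym^r M satisfies det(Sym^r(f)) = (det f)^{(n+r-1)!/(n!·(r-1)!)}. -/
open scoped TensorProduct

/-- The submodule of relations defining the symmetric power: differences of pure tensors
related by a permutation of the factors. -/
def symRel (R : Type*) [CommRing R] (n : ℕ) (M : Type*) [AddCommGroup M] [Module R M] :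
    Submodule R (⨂[R]^n M) :=
  Submodule.span R {x | ∃ (σ : Equiv.Perm (Fin n)) (v : Fin n → M),
    x = PiTensorProduct.tprod R v - PiTensorProduct.tprod R (v ∘ σ)}

/-- The `n`-th symmetric power of the `R`-module `M`: the quotient of the `n`-fold tensor
power by the permutation action of the symmetric group. -/
def SymPow (R : Type*) [CommRing R] (n : ℕ) (M : Type*) [AddCommGroup M] [Module R M] :=
  (⨂[R]^n M) ⧸ symRel R n M

noncomputable instance (R : Type*) [CommRing R] (n : ℕ) (M : Type*) [AddCommGroup M] [Module R M] :
    AddCommGroup (SymPow R n M) :=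
  inferInstanceAs (AddCommGroup ((⨂[R]^n M) ⧸ symRel R n M))

noncomputable instance (R : Type*) [CommRing R] (n : ℕ) (M : Type*) [AddCommGroup M] [Module R M] :
    Module R (SymPow R n M) :=
  inferInstanceAs (Module R ((⨂[R]^n M) ⧸ symRel R n M))

/-- The canonical quotient map from the tensor power to the symmetric power. -/
noncomputable def SymPow.mk (R : Type*) [CommRing R] (n : ℕ) (M : Type*) [AddCommGroup M] [Module R M] :
    (⨂[R]^n M) →ₗ[R] SymPow R n M :=
  (symRel R n M).mkQ

/-- The product `v 0 · v 1 · ⋯ · v (n-1)` in the symmetric power `SymPow R n M`. -/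
noncomputable def SymPow.prod (R : Type*) [CommRing R] {n : ℕ} {M : Type*} [AddCommGroup M] [Module R M]
    (v : Fin n → M) : SymPow R n M :=
  SymPow.mk R n M (PiTensorProduct.tprod R v)

/-- The wedge `v 0 ∧ v 1 ∧ ⋯ ∧ v (n-1)`, as an element of the `n`-th exterior power
`⋀[R]^n M`. -/
noncomputable def wedgeMk (R : Type*) [CommRing R] {n : ℕ} {M : Type*} [AddCommGroup M] [Module R M]
    (v : Fin n → M) : ⋀[R]^n M :=
  ⟨ExteriorAlgebra.ιMulti R n v, ExteriorAlgebra.ιMulti_range R n (Set.mem_range_self v)⟩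

/-- Functoriality of the symmetric power. -/
noncomputable def SymPow.map (R : Type*) [CommRing R] {n : ℕ} {M N : Type*}
    [AddCommGroup M] [Module R M] [AddCommGroup N] [Module R N] (f : M →ₗ[R] N) :
    SymPow R n M →ₗ[R] SymPow R n N :=
  Submodule.mapQ (symRel R n M) (symRel R n N) (PiTensorProduct.map fun _ => f) (by
    rw [symRel, Submodule.span_le]
    rintro x ⟨σ, v, rfl⟩
    simp only [SetLike.mem_coe, Submodule.mem_comap, map_sub, PiTensorProduct.map_tprod]
    exact Submodule.subset_span ⟨σ, fun i => f (v i), rfl⟩)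



namespace SymPowAux

variable {n r : ℕ}

/-- The multiset (element of `Sym`) associated to a tuple. -/
def symOf (u : Fin r → Fin n) : Sym (Fin n) r :=
  ⟨(List.ofFn u : Multiset (Fin n)), by simp⟩

lemma coe_symOf (u : Fin r → Fin n) :
    (symOf u : Multiset (Fin n)) = Multiset.map u Finset.univ.val := by
  simp [symOf, ← Fin.univ_val_map]

lemma symOf_comp_perm (u : Fin r → Fin n) (σ : Equiv.Perm (Fin r)) :
    symOf (u ∘ σ) = symOf u := by
  apply Sym.ext
  rw [coe_symOf, coe_symOf]
  have h1 : Multiset.map (⇑σ) Finset.univ.val = Finset.univ.val := by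
    have := Finset.map_univ_equiv σ
    calc Multiset.map (⇑σ) Finset.univ.val = (Finset.map σ.toEmbedding Finset.univ).val := rfl
    _ = Finset.univ.val := by rw [this]
  calc Multiset.map (u ∘ ⇑σ) Finset.univ.val
      = Multiset.map u (Multiset.map (⇑σ) Finset.univ.val) := by rw [Multiset.map_map]
    _ = Multiset.map u Finset.univ.val := by rw [h1]

/-- The sorted tuple associated to an element of `Sym (Fin n) r`. -/
def sortedTuple (m : Sym (Fin n) r) : Fin r → Fin n :=
  fun k => (Multiset.sort (m : Multiset (Fin n)) (· ≤ ·)).get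
    (Fin.cast (by rw [Multiset.length_sort]; exact m.2.symm) k)

lemma ofFn_sortedTuple (m : Sym (Fin n) r) :
    List.ofFn (sortedTuple m) = Multiset.sort (m : Multiset (Fin n)) (· ≤ ·) := by
  have hl : (Multiset.sort (m : Multiset (Fin n)) (· ≤ ·)).length = r := by
    rw [Multiset.length_sort]; exact m.2
  apply List.ext_getElem (by simp [hl])
  intro i h1 h2
  simp [sortedTuple]

lemma symOf_sortedTuple (m : Sym (Fin n) r) : symOf (sortedTuple m) = m := by
  apply Sym.ext
  show ((List.ofFn (sortedTuple m) : Multiset (Fin n))) = _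
  rw [ofFn_sortedTuple, Multiset.sort_eq]

lemma monotone_sortedTuple (m : Sym (Fin n) r) : Monotone (sortedTuple m) := by
  rw [← List.sortedLE_ofFn_iff, ofFn_sortedTuple]
  exact (Multiset.pairwise_sort _ _).sortedLE

lemma eq_of_monotone_of_symOf_eq {w w' : Fin r → Fin n} (hw : Monotone w) (hw' : Monotone w')
    (h : symOf w = symOf w') : w = w' := by
  have hperm : List.Perm (List.ofFn w) (List.ofFn w') := by
    rw [← Multiset.coe_eq_coe]
    exact congrArg Sym.toMultiset h
  have heq : List.ofFn w = List.ofFn w' :=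
    hperm.eq_of_pairwise' hw.sortedLE_ofFn.pairwise hw'.sortedLE_ofFn.pairwise
  funext k
  have h1 : w k = (List.ofFn w)[(k : ℕ)]'(by simp) := by simp
  have h2 : w' k = (List.ofFn w')[(k : ℕ)]'(by simp) := by simp
  rw [h1, h2]
  exact List.getElem_of_eq heq _

lemma exists_comp_perm_eq {w w' : Fin r → Fin n} (h : symOf w = symOf w') :
    ∃ σ : Equiv.Perm (Fin r), w' = w ∘ σ := by
  have h1 : w ∘ Tuple.sort w = w' ∘ Tuple.sort w' := by
    apply eq_of_monotone_of_symOf_eq (Tuple.monotone_sort w) (Tuple.monotone_sort w')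
    rw [symOf_comp_perm, symOf_comp_perm, h]
  refine ⟨(Tuple.sort w').symm.trans (Tuple.sort w), ?_⟩
  funext k
  have := congrFun h1 ((Tuple.sort w').symm k)
  simpa using this.symm

end SymPowAux

namespace SymPowAux

variable {R : Type*} [CommRing R] {n r : ℕ} {M : Type*} [AddCommGroup M] [Module R M]

/-- The coordinate multilinear map into finsupps on `Sym (Fin n) r`. -/
noncomputable def mu (b : Module.Basis (Fin n) R M) :
    MultilinearMap R (fun _ : Fin r => M) (Sym (Fin n) r →₀ R) :=
  ∑ u : Fin r → Fin n,
    (Finsupp.lsingle (symOf u)).compMultilinearMap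
      ((MultilinearMap.mkPiAlgebra R (Fin r) R).compLinearMap
        (fun k => (Finsupp.lapply (u k)).comp b.repr.toLinearMap))

lemma mu_apply (b : Module.Basis (Fin n) R M) (v : Fin r → M) :
    mu b v = ∑ u : Fin r → Fin n,
      Finsupp.single (symOf u) (∏ k, b.repr (v k) (u k)) := by
  simp [mu, MultilinearMap.sum_apply]

lemma mu_basis (b : Module.Basis (Fin n) R M) (u' : Fin r → Fin n) :
    mu b (b ∘ u') = Finsupp.single (symOf u') 1 := by
  rw [mu_apply]
  rw [Finset.sum_eq_single u']
  · simp
  · intro u _ hu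
    have : ∃ k, u' k ≠ u k := by
      by_contra hc
      push_neg at hc
      exact hu (funext fun k => (hc k).symm)
    obtain ⟨k, hk⟩ := this
    have : (b.repr ((b ∘ u') k)) (u k) = 0 := by
      simp [Finsupp.single_apply, hk]
    rw [Finset.prod_eq_zero (Finset.mem_univ k) this, Finsupp.single_zero]
  · intro h
    exact absurd (Finset.mem_univ u') h

/-- Coordinate map on the tensor power. -/
noncomputable def phi (b : Module.Basis (Fin n) R M) :
    (⨂[R]^r M) →ₗ[R] (Sym (Fin n) r →₀ R) :=
  PiTensorProduct.lift (mu b)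

lemma phi_tprod (b : Module.Basis (Fin n) R M) (v : Fin r → M) :
    phi b (PiTensorProduct.tprod R v) = mu b v :=
  PiTensorProduct.lift.tprod v

lemma phi_rel (b : Module.Basis (Fin n) R M) : symRel R r M ≤ LinearMap.ker (phi b) := by
  rw [symRel, Submodule.span_le]
  rintro x ⟨σ, v, rfl⟩
  simp only [SetLike.mem_coe, LinearMap.mem_ker, map_sub, phi_tprod, sub_eq_zero]
  rw [mu_apply, mu_apply]
  apply Fintype.sum_equiv (Equiv.arrowCongr σ.symm (Equiv.refl (Fin n)))
  intro u
  have he : ⇑(Equiv.arrowCongr σ.symm (Equiv.refl (Fin n))) u = u ∘ ⇑σ := rfl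
  rw [he]
  congr 1
  · exact (symOf_comp_perm u σ).symm
  · exact (Equiv.prod_comp σ (fun k => (b.repr (v k)) (u k))).symm

/-- The induced coordinate map on the symmetric power. -/
noncomputable def phiBar (b : Module.Basis (Fin n) R M) :
    SymPow R r M →ₗ[R] (Sym (Fin n) r →₀ R) :=
  Submodule.liftQ _ (phi b) (phi_rel b)

lemma phiBar_prod (b : Module.Basis (Fin n) R M) (v : Fin r → M) :
    phiBar b (SymPow.prod R v) = mu b v := by
  exact phi_tprod b v

/-- Inverse: basis vectors to products. -/
noncomputable def psi (b : Module.Basis (Fin n) R M) :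
    (Sym (Fin n) r →₀ R) →ₗ[R] SymPow R r M :=
  Finsupp.linearCombination R (fun m => SymPow.prod R (b ∘ sortedTuple m))

lemma prod_eq_of_symOf_eq (b : Module.Basis (Fin n) R M) {w w' : Fin r → Fin n}
    (h : symOf w = symOf w') : SymPow.prod R (b ∘ w) = SymPow.prod R (b ∘ w') := by
  obtain ⟨σ, rfl⟩ := exists_comp_perm_eq h
  show Submodule.Quotient.mk _ = Submodule.Quotient.mk _
  rw [Submodule.Quotient.eq]
  exact Submodule.subset_span ⟨σ, b ∘ w, rfl⟩

lemma tprod_expand (b : Module.Basis (Fin n) R M) (v : Fin r → M) :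
    PiTensorProduct.tprod R v = ∑ u : Fin r → Fin n,
      (∏ k, b.repr (v k) (u k)) • PiTensorProduct.tprod R (b ∘ u) := by
  have hv : v = fun k => ∑ j, b.repr (v k) j • b j := funext fun k => (b.sum_repr (v k)).symm
  conv_lhs => rw [hv]
  rw [MultilinearMap.map_sum (PiTensorProduct.tprod R) (fun k j => b.repr (v k) j • b j)]
  refine Finset.sum_congr rfl fun u _ => ?_
  exact MultilinearMap.map_smul_univ (PiTensorProduct.tprod R) (fun k => b.repr (v k) (u k)) (b ∘ u)

end SymPowAux

namespace SymPowAux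

variable {R : Type*} [CommRing R] {n r : ℕ} {M : Type*} [AddCommGroup M] [Module R M]

lemma psi_single (b : Module.Basis (Fin n) R M) (m : Sym (Fin n) r) (c : R) :
    psi b (Finsupp.single m c) = c • SymPow.prod R (b ∘ sortedTuple m) := by
  rw [psi, Finsupp.linearCombination_single]

lemma phiBar_psi (b : Module.Basis (Fin n) R M) :
    (phiBar b).comp (psi (r := r) b) = LinearMap.id := by
  apply Finsupp.lhom_ext
  intro m c
  rw [LinearMap.comp_apply, psi_single, map_smul, phiBar_prod, mu_basis,
    symOf_sortedTuple, LinearMap.id_apply, Finsupp.smul_single, smul_eq_mul, mul_one]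

lemma sympowMap_prod (f : M →ₗ[R] M) (v : Fin r → M) :
    SymPow.map R f (SymPow.prod R v) = SymPow.prod R (fun i => f (v i)) := by
  have h : SymPow.map R f (SymPow.prod R v) =
      SymPow.mk R r M (PiTensorProduct.map (fun _ => f) (PiTensorProduct.tprod R v)) := rfl
  rw [h, PiTensorProduct.map_tprod]
  rfl

lemma psi_phiBar (b : Module.Basis (Fin n) R M) :
    (psi b).comp (phiBar (r := r) b) = LinearMap.id := by
  apply Submodule.linearMap_qext
  apply PiTensorProduct.ext
  apply MultilinearMap.ext
  intro v
  show psi b (phiBar b (SymPow.prod R v)) = SymPow.prod R v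
  have h2 : ∀ u : Fin r → Fin n,
      psi b (Finsupp.single (symOf u) (∏ k, b.repr (v k) (u k))) =
        (∏ k, b.repr (v k) (u k)) • SymPow.prod R (b ∘ u) := by
    intro u
    rw [psi_single]
    congr 1
    exact prod_eq_of_symOf_eq b (by rw [symOf_sortedTuple])
  have h3 : SymPow.prod R v =
      ∑ u : Fin r → Fin n, (∏ k, b.repr (v k) (u k)) • SymPow.prod R (b ∘ u) := by
    rw [SymPow.prod, tprod_expand b v, map_sum]
    refine Finset.sum_congr rfl fun u _ => ?_
    rw [map_smul]
    rfl
  rw [phiBar_prod, mu_apply, map_sum, Finset.sum_congr rfl fun u _ => h2 u]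
  exact h3.symm

/-- The coordinate linear equivalence for the symmetric power. -/
noncomputable def symEquiv (b : Module.Basis (Fin n) R M) :
    SymPow R r M ≃ₗ[R] (Sym (Fin n) r →₀ R) :=
  LinearEquiv.ofLinear (phiBar b) (psi b) (phiBar_psi b) (psi_phiBar b)

/-- The basis of the symmetric power indexed by `Sym (Fin n) r`. -/
noncomputable def symBasis (b : Module.Basis (Fin n) R M) : Module.Basis (Sym (Fin n) r) R (SymPow R r M) :=
  Module.Basis.ofRepr (symEquiv b)

lemma symBasis_repr (b : Module.Basis (Fin n) R M) (x : SymPow R r M) :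
    (symBasis b).repr x = phiBar b x := rfl

lemma symBasis_apply (b : Module.Basis (Fin n) R M) (m : Sym (Fin n) r) :
    symBasis b m = SymPow.prod R (b ∘ sortedTuple m) := by
  apply (symBasis b).repr.injective
  rw [Module.Basis.repr_self, symBasis_repr, phiBar_prod, mu_basis, symOf_sortedTuple]

/-- The matrix of `SymPow.map f` in the `symBasis`, as an explicit polynomial expression. -/
def symMatrix (r : ℕ) {n : ℕ} {S : Type*} [CommRing S] (A : Matrix (Fin n) (Fin n) S) :
    Matrix (Sym (Fin n) r) (Sym (Fin n) r) S :=
  Matrix.of fun m m' => ∑ u : Fin r → Fin n,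
    if symOf u = m then ∏ k, A (u k) (sortedTuple m' k) else 0

lemma toMatrix_symPow_map (b : Module.Basis (Fin n) R M) (f : M →ₗ[R] M) :
    LinearMap.toMatrix (symBasis b) (symBasis b) (SymPow.map R (n := r) f) =
      symMatrix r (LinearMap.toMatrix b b f) := by
  ext m m'
  rw [LinearMap.toMatrix_apply, symBasis_apply, sympowMap_prod, symBasis_repr]
  have h1 : (fun i => f ((⇑b ∘ sortedTuple m') i)) = fun i => b (sortedTuple m' i) |> f := rfl
  rw [phiBar_prod, mu_apply, Finsupp.finset_sum_apply]
  refine Finset.sum_congr rfl fun u _ => ?_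
  rw [Finsupp.single_apply]
  refine if_congr (Iff.rfl) ?_ rfl
  refine Finset.prod_congr rfl fun k _ => ?_
  rw [LinearMap.toMatrix_apply]
  rfl

end SymPowAux

namespace SymPowAux

variable {R : Type*} [CommRing R] {n r : ℕ} {M : Type*} [AddCommGroup M] [Module R M]

lemma symPow_map_comp (f g : M →ₗ[R] M) :
    SymPow.map R (n := r) (f ∘ₗ g) = (SymPow.map R (n := r) f).comp (SymPow.map R (n := r) g) := by
  apply Submodule.linearMap_qext
  apply PiTensorProduct.ext
  apply MultilinearMap.ext
  intro v
  show SymPow.map R (f ∘ₗ g) (SymPow.prod R v) =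
    SymPow.map R f (SymPow.map R g (SymPow.prod R v))
  rw [sympowMap_prod, sympowMap_prod, sympowMap_prod]
  rfl

lemma symMatrix_mul {S : Type*} [CommRing S] (A B : Matrix (Fin n) (Fin n) S) :
    symMatrix r (A * B) = symMatrix r A * symMatrix r B := by
  classical
  let bS : Module.Basis (Fin n) S (Fin n → S) := Pi.basisFun S (Fin n)
  have key : ∀ C : Matrix (Fin n) (Fin n) S, symMatrix r C =
      LinearMap.toMatrix (symBasis bS) (symBasis bS)
        (SymPow.map S (n := r) (Matrix.toLin bS bS C)) := by
    intro C
    rw [toMatrix_symPow_map, LinearMap.toMatrix_toLin]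
  rw [key, key, key, Matrix.toLin_mul bS bS bS, symPow_map_comp,
    LinearMap.toMatrix_comp (symBasis bS) (symBasis bS) (symBasis bS)]

lemma det_eq_prod_diag {ι : Type*} [Fintype ι] [DecidableEq ι] {S : Type*} [CommRing S]
    (B : Matrix ι ι S) (f : ι → ℤ)
    (h : ∀ i j, B i j ≠ 0 → f i ≤ f j ∧ (f i = f j → i = j)) :
    B.det = ∏ i, B i i := by
  rw [Matrix.det_apply]
  rw [Finset.sum_eq_single (1 : Equiv.Perm ι)]
  · simp
  · intro σ _ hσ
    have hex : ∃ i, B (σ i) i = 0 := by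
      by_contra hc
      push_neg at hc
      have h1 : ∀ i ∈ Finset.univ, f (σ i) ≤ f i := fun i _ => (h _ _ (hc i)).1
      have h2 : ∑ i, f (σ i) = ∑ i, f i := Equiv.sum_comp σ f
      have h3 := (Finset.sum_eq_sum_iff_of_le h1).1 h2
      exact hσ (Equiv.ext fun i => (h _ _ (hc i)).2 (h3 i (Finset.mem_univ i)))
    obtain ⟨i, hi⟩ := hex
    have hz : ∏ j, B (σ j) j = 0 := Finset.prod_eq_zero (Finset.mem_univ i) hi
    rw [hz, smul_zero]
  · intro h1; exact absurd (Finset.mem_univ _) h1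

end SymPowAux

namespace SymPowAux

variable {n r : ℕ}

lemma sum_count_card (m : Sym (Fin n) r) :
    ∑ i : Fin n, (m : Multiset (Fin n)).count i = r := by
  classical
  have h := Multiset.toFinset_sum_count_eq (m : Multiset (Fin n))
  have h2 : ∑ i ∈ (m : Multiset (Fin n)).toFinset, (m : Multiset (Fin n)).count i =
      ∑ i : Fin n, (m : Multiset (Fin n)).count i := by
    apply Finset.sum_subset (Finset.subset_univ _)
    intro x _ hx
    exact Multiset.count_eq_zero.2 fun hmem => hx (Multiset.mem_toFinset.2 hmem)
  rw [← h2, h]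
  exact m.2

lemma sum_count_eq_sum_count (i i' : Fin n) :
    ∑ m : Sym (Fin n) r, (m : Multiset (Fin n)).count i =
      ∑ m : Sym (Fin n) r, (m : Multiset (Fin n)).count i' := by
  classical
  apply Fintype.sum_equiv (Sym.equivCongr (Equiv.swap i i'))
  intro m
  have h1 : ((Sym.equivCongr (Equiv.swap i i') m : Sym (Fin n) r) : Multiset (Fin n)) =
      Multiset.map (Equiv.swap i i') (m : Multiset (Fin n)) := Sym.coe_map m _
  rw [h1]
  have h2 := Multiset.count_map_eq_count' (Equiv.swap i i') (m : Multiset (Fin n))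
    (Equiv.injective _) i
  have h3 : Equiv.swap i i' i = i' := Equiv.swap_apply_left i i'
  rw [h3] at h2
  exact h2.symm

lemma card_sym_fin : Fintype.card (Sym (Fin n) r) = (n + r - 1).choose r := by
  rw [Sym.card_sym_eq_choose, Fintype.card_fin]

lemma choose_id (hn : 1 ≤ n) (hr : 1 ≤ r) :
    r * (n + r - 1).choose r = n * (n + r - 1).choose (r - 1) := by
  have h1 : (n + r - 1).choose r * r.factorial * (n - 1).factorial = (n + r - 1).factorial := by
    have h := Nat.choose_mul_factorial_mul_factorial (show r ≤ n + r - 1 by omega)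
    rwa [show n + r - 1 - r = n - 1 by omega] at h
  have h2 : (n + r - 1).choose (r - 1) * (r - 1).factorial * n.factorial
      = (n + r - 1).factorial := by
    have h := Nat.choose_mul_factorial_mul_factorial (show r - 1 ≤ n + r - 1 by omega)
    rwa [show n + r - 1 - (r - 1) = n by omega] at h
  have hr' : r * (r - 1).factorial = r.factorial := Nat.mul_factorial_pred (by omega)
  have hn' : n * (n - 1).factorial = n.factorial := Nat.mul_factorial_pred (by omega)
  apply Nat.eq_of_mul_eq_mul_right
    (Nat.mul_pos (Nat.factorial_pos (r - 1)) (Nat.factorial_pos (n - 1)))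
  calc r * (n + r - 1).choose r * ((r - 1).factorial * (n - 1).factorial)
      = (n + r - 1).choose r * (r * (r - 1).factorial) * (n - 1).factorial := by ring
    _ = (n + r - 1).factorial := by rw [hr']; exact h1
    _ = (n + r - 1).choose (r - 1) * (r - 1).factorial * n.factorial := h2.symm
    _ = (n + r - 1).choose (r - 1) * (r - 1).factorial * (n * (n - 1).factorial) := by rw [hn']
    _ = n * (n + r - 1).choose (r - 1) * ((r - 1).factorial * (n - 1).factorial) := by ring

lemma sum_count (hn : 1 ≤ n) (hr : 1 ≤ r) (i : Fin n) :
    ∑ m : Sym (Fin n) r, (m : Multiset (Fin n)).count i = (n + r - 1).choose (r - 1) := by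
  apply Nat.eq_of_mul_eq_mul_left (show 0 < n by omega)
  have h1 : n * ∑ m : Sym (Fin n) r, (m : Multiset (Fin n)).count i
      = ∑ i' : Fin n, ∑ m : Sym (Fin n) r, (m : Multiset (Fin n)).count i' := by
    rw [Finset.sum_congr rfl fun i' _ => sum_count_eq_sum_count i' i, Finset.sum_const,
      Finset.card_univ, Fintype.card_fin, smul_eq_mul]
  rw [h1, Finset.sum_comm, Finset.sum_congr rfl fun m _ => sum_count_card m,
    Finset.sum_const, Finset.card_univ, card_sym_fin, smul_eq_mul, mul_comm,
    choose_id hn hr]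

lemma prod_count {S : Type*} [CommRing S] (g : Fin n → S) (m : Sym (Fin n) r) :
    ∏ k : Fin r, g (sortedTuple m k) = ∏ i : Fin n, g i ^ (m : Multiset (Fin n)).count i := by
  classical
  have h0 : ∏ k, g (sortedTuple m k) = ((m : Multiset (Fin n)).map g).prod := by
    rw [Finset.prod_eq_multiset_prod]
    have : (m : Multiset (Fin n)) = Multiset.map (sortedTuple m) Finset.univ.val := by
      rw [← coe_symOf, symOf_sortedTuple]
    rw [this, Multiset.map_map]
    rfl
  rw [h0, Finset.prod_multiset_map_count]
  apply Finset.prod_subset (Finset.subset_univ _)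
  intro x _ hx
  rw [Multiset.count_eq_zero.2 fun hmem => hx (Multiset.mem_toFinset.2 hmem), pow_zero]

end SymPowAux

namespace SymPowAux

variable {n r : ℕ}

lemma key_symOf (ρ : Fin n → ℤ) (u : Fin r → Fin n) :
    ((symOf u : Multiset (Fin n)).map ρ).sum = ∑ k, ρ (u k) := by
  rw [coe_symOf, Multiset.map_map, Finset.sum_eq_multiset_sum]
  rfl

lemma det_symMatrix_tri {S : Type*} [CommRing S] (hn : 1 ≤ n) (hr : 1 ≤ r)
    (A : Matrix (Fin n) (Fin n) S) (ρ : Fin n → ℤ) (hinj : Function.Injective ρ)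
    (hA : ∀ a c, A a c ≠ 0 → ρ a ≤ ρ c) :
    (symMatrix r A).det = A.det ^ ((n + r - 1).choose (r - 1)) := by
  classical
  have hdetA : A.det = ∏ i, A i i :=
    det_eq_prod_diag A ρ (fun i j hij => ⟨hA _ _ hij, fun he => hinj he⟩)
  have htri : ∀ m m' : Sym (Fin n) r, symMatrix r A m m' ≠ 0 →
      ((m : Multiset (Fin n)).map ρ).sum ≤ ((m' : Multiset (Fin n)).map ρ).sum ∧
      (((m : Multiset (Fin n)).map ρ).sum = ((m' : Multiset (Fin n)).map ρ).sum → m = m') := by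
    intro m m' hmm'
    have hmm'2 : (∑ u : Fin r → Fin n,
        if symOf u = m then ∏ k, A (u k) (sortedTuple m' k) else 0) ≠ 0 := hmm'
    obtain ⟨u, _, hterm⟩ := Finset.exists_ne_zero_of_sum_ne_zero hmm'2
    by_cases hc : symOf u = m
    case neg => rw [if_neg hc] at hterm; exact absurd rfl hterm
    rw [if_pos hc] at hterm
    have hfac : ∀ k, A (u k) (sortedTuple m' k) ≠ 0 :=
      fun k hk => hterm (Finset.prod_eq_zero (Finset.mem_univ k) hk)
    have hle : ∀ k ∈ Finset.univ, ρ (u k) ≤ ρ (sortedTuple m' k) :=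
      fun k _ => hA _ _ (hfac k)
    have hm : ((m : Multiset (Fin n)).map ρ).sum = ∑ k, ρ (u k) := by
      rw [← hc, key_symOf]
    have hm' : ((m' : Multiset (Fin n)).map ρ).sum = ∑ k, ρ (sortedTuple m' k) := by
      have h := key_symOf ρ (sortedTuple m')
      rw [symOf_sortedTuple] at h
      exact h
    constructor
    · rw [hm, hm']
      exact Finset.sum_le_sum hle
    · intro heq
      rw [hm, hm'] at heq
      have hpt := (Finset.sum_eq_sum_iff_of_le hle).1 heq
      have hu' : u = sortedTuple m' := funext fun k => hinj (hpt k (Finset.mem_univ k))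
      rw [← hc, hu', symOf_sortedTuple]
  have hdet := det_eq_prod_diag (symMatrix r A)
    (fun m => ((m : Multiset (Fin n)).map ρ).sum) htri
  have hdiag : ∀ m : Sym (Fin n) r,
      symMatrix r A m m = ∏ k, A (sortedTuple m k) (sortedTuple m k) := by
    intro m
    show (∑ u : Fin r → Fin n, if symOf u = m then ∏ k, A (u k) (sortedTuple m k) else 0) = _
    rw [Finset.sum_eq_single (sortedTuple m)]
    · rw [if_pos (symOf_sortedTuple m)]
    · intro u _ hu
      by_cases hc : symOf u = m
      · rw [if_pos hc]
        by_contra hp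
        have hfac : ∀ k, A (u k) (sortedTuple m k) ≠ 0 :=
          fun k hk => hp (Finset.prod_eq_zero (Finset.mem_univ k) hk)
        have hle : ∀ k ∈ Finset.univ, ρ (u k) ≤ ρ (sortedTuple m k) :=
          fun k _ => hA _ _ (hfac k)
        have ha := key_symOf ρ u
        have hb := key_symOf ρ (sortedTuple m)
        rw [hc] at ha
        rw [symOf_sortedTuple] at hb
        have h1 : ∑ k, ρ (u k) = ∑ k, ρ (sortedTuple m k) := by rw [← ha, ← hb]
        have hpt := (Finset.sum_eq_sum_iff_of_le hle).1 h1
        exact hu (funext fun k => hinj (hpt k (Finset.mem_univ k)))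
      · rw [if_neg hc]
    · intro hmem
      exact absurd (Finset.mem_univ _) hmem
  rw [hdet, Finset.prod_congr rfl fun m _ => hdiag m, hdetA,
    Finset.prod_congr rfl fun m (_ : m ∈ Finset.univ) => prod_count (fun i => A i i) m,
    Finset.prod_comm,
    Finset.prod_congr rfl fun i (_ : i ∈ Finset.univ) =>
      Finset.prod_pow_eq_pow_sum Finset.univ _ _,
    Finset.prod_congr rfl fun i (_ : i ∈ Finset.univ) => by rw [sum_count hn hr i],
    Finset.prod_pow]

end SymPowAux

namespace SymPowAux

variable {n r : ℕ}

def rhoOf (i j : Fin n) : Fin n → ℤ :=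
  fun a => if a = i then -1 else if a = j then (n : ℤ) else (a : ℤ)

lemma rhoOf_inj (i j : Fin n) : Function.Injective (rhoOf i j) := by
  intro x y h
  unfold rhoOf at h
  by_cases h1 : x = i
  · by_cases h2 : y = i
    · rw [h1, h2]
    · exfalso
      rw [if_pos h1, if_neg h2] at h
      by_cases h4 : y = j
      · rw [if_pos h4] at h; omega
      · rw [if_neg h4] at h; omega
  · by_cases h2 : y = i
    · exfalso
      rw [if_neg h1, if_pos h2] at h
      by_cases h3 : x = j
      · rw [if_pos h3] at h; omega
      · rw [if_neg h3] at h; omega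
    · rw [if_neg h1, if_neg h2] at h
      by_cases h3 : x = j <;> by_cases h4 : y = j
      · rw [h3, h4]
      · exfalso; rw [if_pos h3, if_neg h4] at h; have := y.isLt; omega
      · exfalso; rw [if_neg h3, if_pos h4] at h; have := x.isLt; omega
      · rw [if_neg h3, if_neg h4] at h
        exact Fin.ext (by omega)

lemma rhoOf_le {S : Type*} [CommRing S] (i j : Fin n) (hij : i ≠ j) (c : S) :
    ∀ a b, Matrix.transvection i j c a b ≠ 0 → rhoOf i j a ≤ rhoOf i j b := by
  intro a b hab
  by_cases hd : a = b
  · rw [hd]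
  · have hstd : Matrix.single i j c a b ≠ 0 := by
      intro h0
      apply hab
      rw [Matrix.transvection, Matrix.add_apply, Matrix.one_apply_ne hd, h0, add_zero]
    have hij' : i = a ∧ j = b := by
      by_contra hc
      exact hstd (by simp [Matrix.single, hc])
    obtain ⟨rfl, rfl⟩ := hij'
    have h1 : rhoOf i j i = -1 := by simp [rhoOf]
    have h2 : rhoOf i j j = (n : ℤ) := by
      rw [rhoOf, if_neg (Ne.symm hij), if_pos rfl]
    rw [h1, h2]
    omega

lemma det_symMatrix_field {K : Type*} [Field K] (hn : 1 ≤ n) (hr : 1 ≤ r)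
    (A : Matrix (Fin n) (Fin n) K) :
    (symMatrix r A).det = A.det ^ ((n + r - 1).choose (r - 1)) := by
  classical
  obtain ⟨L, L', D, h⟩ := Matrix.Pivot.exists_list_transvec_mul_diagonal_mul_list_transvec A
  set P : Matrix (Fin n) (Fin n) K → Prop :=
    fun B => (symMatrix r B).det = B.det ^ ((n + r - 1).choose (r - 1)) with hP
  have hmul : ∀ B C, P B → P C → P (B * C) := by
    intro B C hB hC
    show (symMatrix r (B * C)).det = _
    rw [symMatrix_mul, Matrix.det_mul, Matrix.det_mul, hB, hC, mul_pow]
  have htrans : ∀ t : Matrix.TransvectionStruct (Fin n) K, P t.toMatrix := by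
    intro t
    show (symMatrix r (Matrix.transvection t.i t.j t.c)).det = _
    exact det_symMatrix_tri hn hr _ (rhoOf t.i t.j) (rhoOf_inj t.i t.j)
      (rhoOf_le t.i t.j t.hij t.c)
  have hdiagP : ∀ D0 : Fin n → K, P (Matrix.diagonal D0) := by
    intro D0
    apply det_symMatrix_tri hn hr _ (fun a => (a : ℤ)) (fun x y hxy => by
      have h : ((x : ℕ) : ℤ) = ((y : ℕ) : ℤ) := hxy
      exact Fin.ext (by omega))
    intro a b hab
    have : a = b := by
      by_contra hne
      exact hab (Matrix.diagonal_apply_ne D0 hne)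
    rw [this]
  have hlist : ∀ L0 : List (Matrix.TransvectionStruct (Fin n) K),
      P (L0.map Matrix.TransvectionStruct.toMatrix).prod := by
    intro L0
    induction L0 with
    | nil =>
      show P (1 : Matrix (Fin n) (Fin n) K)
      rw [← Matrix.diagonal_one]
      exact hdiagP 1
    | cons t ts ih =>
      rw [List.map_cons, List.prod_cons]
      exact hmul _ _ (htrans t) ih
  rw [h]
  exact hmul _ _ (hmul _ _ (hlist L) (hdiagP D)) (hlist L')

end SymPowAux

namespace SymPowAux

variable {n r : ℕ}

lemma symMatrix_map {S S' : Type*} [CommRing S] [CommRing S'] (g : S →+* S')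
    (A : Matrix (Fin n) (Fin n) S) :
    (symMatrix r A).map g = symMatrix r (A.map g) := by
  ext m m'
  simp only [Matrix.map_apply, symMatrix, Matrix.of_apply]
  rw [map_sum]
  refine Finset.sum_congr rfl fun u _ => ?_
  rw [apply_ite g, map_zero, map_prod]

lemma det_symMatrix_comm {S : Type*} [CommRing S] (hn : 1 ≤ n) (hr : 1 ≤ r)
    (A : Matrix (Fin n) (Fin n) S) :
    (symMatrix r A).det = A.det ^ ((n + r - 1).choose (r - 1)) := by
  classical
  set X : Matrix (Fin n) (Fin n) (MvPolynomial (Fin n × Fin n) ℤ) :=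
    Matrix.of (fun i j => MvPolynomial.X (i, j)) with hX
  have hgen : (symMatrix r X).det = X.det ^ ((n + r - 1).choose (r - 1)) := by
    set K := FractionRing (MvPolynomial (Fin n × Fin n) ℤ)
    set φ : MvPolynomial (Fin n × Fin n) ℤ →+* K := algebraMap _ _ with hφ
    have hinj : Function.Injective φ := IsFractionRing.injective _ _
    apply hinj
    have hfield := det_symMatrix_field (K := K) hn hr (X.map φ)
    calc φ ((symMatrix r X).det)
        = ((symMatrix r X).map φ).det := by rw [RingHom.map_det, RingHom.mapMatrix_apply]
      _ = (symMatrix r (X.map φ)).det := by rw [symMatrix_map]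
      _ = (X.map φ).det ^ ((n + r - 1).choose (r - 1)) := hfield
      _ = (φ X.det) ^ ((n + r - 1).choose (r - 1)) := by rw [RingHom.map_det, RingHom.mapMatrix_apply]
      _ = φ (X.det ^ ((n + r - 1).choose (r - 1))) := (map_pow φ _ _).symm
  set φS : MvPolynomial (Fin n × Fin n) ℤ →+* S :=
    (MvPolynomial.aeval (R := ℤ) fun p : Fin n × Fin n => A p.1 p.2).toRingHom with hφS
  have hXA : X.map φS = A := by
    ext i j
    simp [hX, hφS, Matrix.map_apply]
  calc (symMatrix r A).det
      = (symMatrix r (X.map φS)).det := by rw [hXA]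
    _ = ((symMatrix r X).map φS).det := by rw [symMatrix_map]
    _ = φS ((symMatrix r X).det) := by rw [RingHom.map_det, RingHom.mapMatrix_apply]
    _ = φS (X.det ^ ((n + r - 1).choose (r - 1))) := by rw [hgen]
    _ = φS X.det ^ ((n + r - 1).choose (r - 1)) := map_pow φS _ _
    _ = (X.map φS).det ^ ((n + r - 1).choose (r - 1)) := by rw [RingHom.map_det, RingHom.mapMatrix_apply]
    _ = A.det ^ ((n + r - 1).choose (r - 1)) := by rw [hXA]

end SymPowAux

theorem stmt1 {R M : Type*} [CommRing R] [AddCommGroup M] [Module R M]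
    (n r : ℕ) (hn : 1 ≤ n) (hr : 1 ≤ r)
    (b : Module.Basis (Fin n) R M) (f : M →ₗ[R] M) :
    LinearMap.det (SymPow.map R (n := r) f) =
      (LinearMap.det f) ^ ((n + r - 1).factorial / (n.factorial * (r - 1).factorial)) := by
  classical
  have hE : (n + r - 1).factorial / (n.factorial * (r - 1).factorial)
      = (n + r - 1).choose (r - 1) := by
    rw [Nat.choose_eq_factorial_div_factorial (show r - 1 ≤ n + r - 1 by omega),
      show n + r - 1 - (r - 1) = n by omega, Nat.mul_comm]
  rw [hE]
  have h1 := LinearMap.det_toMatrix (SymPowAux.symBasis b) (SymPow.map R (n := r) f)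
  rw [← h1, SymPowAux.toMatrix_symPow_map b f,
    SymPowAux.det_symMatrix_comm hn hr (LinearMap.toMatrix b b f),
    LinearMap.det_toMatrix]
end

section
/- Let R be a commutative ring with 1, let M be a free R-module of rank n, let 1 ≤ r ≤ n, and let f : M → M be an R-linear endomorphism. Then the induced R-linear endomorphism ⋀^r(f) of the r-th exterior power ⋀^r M satisfies det(⋀^r(f)) = (det f)^{C(n-1, r-1)}, where C(n-1, r-1) = (n-1)!/((r-1)!·(n-r)!). -/
/-- The linear map `⋀[R]^n M →ₗ[R] ⋀[R]^n N` functorially induced by `f : M →ₗ[R] N`. -/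
noncomputable def exteriorPowerMap {R M N : Type*} [CommRing R] [AddCommGroup M] [Module R M]
    [AddCommGroup N] [Module R N] (n : ℕ) (f : M →ₗ[R] N) :
    ⋀[R]^n M →ₗ[R] ⋀[R]^n N :=
  (ExteriorAlgebra.map f).toLinearMap.restrict (p := ⋀[R]^n M) (q := ⋀[R]^n N) (by
    intro x hx
    have h1 : Submodule.map (ExteriorAlgebra.map f).toLinearMap
        ((LinearMap.range (ExteriorAlgebra.ι R (M := M))) ^ n) ≤
        (LinearMap.range (ExteriorAlgebra.ι R (M := N))) ^ n := by
      rw [Submodule.map_pow]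
      refine pow_le_pow_left' ?_ n
      rintro _ ⟨_, ⟨m, rfl⟩, rfl⟩
      exact ⟨f m, (ExteriorAlgebra.map_apply_ι f m).symm⟩
    exact h1 (Submodule.mem_map_of_mem hx))

namespace SylFr

open ExteriorAlgebra

variable {R : Type*} [CommRing R] {M N P : Type*} [AddCommGroup M] [Module R M]
  [AddCommGroup N] [Module R N] [AddCommGroup P] [Module R P]

theorem exteriorPowerMap_coe (r : ℕ) (f : M →ₗ[R] N) (x : ⋀[R]^r M) :
    (exteriorPowerMap r f x : ExteriorAlgebra R N) = ExteriorAlgebra.map f x := rfl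

theorem exteriorPowerMap_comp (r : ℕ) (f : N →ₗ[R] P) (g : M →ₗ[R] N) :
    exteriorPowerMap r (f ∘ₗ g) = (exteriorPowerMap r f) ∘ₗ (exteriorPowerMap r g) := by
  apply LinearMap.ext; intro x; apply Subtype.ext
  show ((exteriorPowerMap r (f ∘ₗ g) x : ExteriorAlgebra R P))
      = (exteriorPowerMap r f (exteriorPowerMap r g x) : ExteriorAlgebra R P)
  rw [exteriorPowerMap_coe, exteriorPowerMap_coe, exteriorPowerMap_coe, ← map_comp_map,
    AlgHom.comp_apply]

variable {n r : ℕ}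

/-- The order embedding of a subset. -/
def emb (s : {s : Finset (Fin n) // s.card = r}) : Fin r ↪o Fin n := s.1.orderEmbOfFin s.2

lemma emb_mem (s : {s : Finset (Fin n) // s.card = r}) (i : Fin r) : emb s i ∈ s.1 :=
  Finset.orderEmbOfFin_mem _ _ _

variable (b : Module.Basis (Fin n) R M)

/-- The wedge of basis vectors indexed by a subset, in the exterior algebra. -/
noncomputable def wedgeAux (s : {s : Finset (Fin n) // s.card = r}) : ExteriorAlgebra R M :=
  ιMulti R r (b ∘ (emb s))

lemma wedgeAux_mem (s : {s : Finset (Fin n) // s.card = r}) : wedgeAux b s ∈ ⋀[R]^r M :=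
  ιMulti_range R r (Set.mem_range_self _)

/-- The dual alternating form associated to a subset. -/
noncomputable def dualAlt (s : {s : Finset (Fin n) // s.card = r}) : M [⋀^Fin r]→ₗ[R] R :=
  (Matrix.detRowAlternating).compLinearMap (LinearMap.pi fun j => b.coord (emb s j))

lemma dualAlt_apply (s : {s : Finset (Fin n) // s.card = r}) (v : Fin r → M) :
    dualAlt b s v = Matrix.det (Matrix.of fun i j => b.repr (v i) (emb s j)) := rfl

/-- dualAlt on the basis wedges gives a delta. -/
lemma dualAlt_wedge (s t : {s : Finset (Fin n) // s.card = r}) :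
    dualAlt b s (b ∘ emb t) = if s = t then 1 else 0 := by
  rw [dualAlt_apply]
  split_ifs with h
  · subst h
    have : (Matrix.of fun i j => (b.repr ((b ∘ emb s) i)) (emb s j)) = (1 : Matrix (Fin r) (Fin r) R) := by
      ext i j
      simp only [Matrix.of_apply, Function.comp_apply, Module.Basis.repr_self, Matrix.one_apply]
      rw [Finsupp.single_apply]
      by_cases hij : i = j
      · simp [hij]
      · have : emb s i ≠ emb s j := fun hc => hij ((emb s).injective hc)
        simp [hij, this]
    rw [this, Matrix.det_one]
  · -- there exists x ∈ t, x ∉ s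
    have hne : (t.1 \ s.1).Nonempty := by
      rw [Finset.sdiff_nonempty]
      intro hsub
      exact h (Subtype.ext (Finset.eq_of_subset_of_card_le hsub (by rw [s.2, t.2])).symm)
    obtain ⟨x, hx⟩ := hne
    rw [Finset.mem_sdiff] at hx
    obtain ⟨i0, hi0⟩ : ∃ i0, emb t i0 = x := by
      have hr := Finset.range_orderEmbOfFin t.1 t.2
      have : x ∈ Set.range (t.1.orderEmbOfFin t.2) := by rw [hr]; exact_mod_cast hx.1
      exact this
    apply Matrix.det_eq_zero_of_row_eq_zero i0
    intro j
    simp only [Matrix.of_apply, Function.comp_apply, hi0, Module.Basis.repr_self]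
    rw [Finsupp.single_apply]
    have : x ≠ emb s j := fun hc => hx.2 (hc ▸ emb_mem s j)
    simp [this]

/-- The lifted dual functional on the exterior algebra. -/
noncomputable def dualFn (s : {s : Finset (Fin n) // s.card = r}) :
    ExteriorAlgebra R M →ₗ[R] R :=
  liftAlternating (Function.update (fun i => (0 : M [⋀^Fin i]→ₗ[R] R)) r (dualAlt b s))

lemma dualFn_ιMulti (s : {s : Finset (Fin n) // s.card = r}) (v : Fin r → M) :
    dualFn b s (ιMulti R r v) = dualAlt b s v := by
  rw [dualFn, liftAlternating_apply_ιMulti, Function.update_self]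

lemma dualFn_wedge (s t : {s : Finset (Fin n) // s.card = r}) :
    dualFn b s (wedgeAux b t) = if s = t then 1 else 0 := by
  rw [wedgeAux, dualFn_ιMulti, dualAlt_wedge]

lemma wedgeAux_linearIndependent : LinearIndependent R (wedgeAux b (r := r)) := by
  rw [linearIndependent_iff']
  intro S g hg t ht
  have := congrArg (dualFn b t) hg
  rw [map_sum, map_zero] at this
  simp_rw [map_smul, dualFn_wedge, smul_eq_mul] at this
  rw [Finset.sum_eq_single t] at this
  · simpa using this
  · intro s hs hst
    simp [Ne.symm hst]
  · intro h; exact absurd ht h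

lemma span_wedgeAux : Submodule.span R (Set.range (wedgeAux b (r := r))) = ⋀[R]^r M := by
  refine le_antisymm (Submodule.span_le.2 ?_) ?_
  · rintro _ ⟨s, rfl⟩
    exact wedgeAux_mem b s
  · rw [← ιMulti_span_fixedDegree R r, Submodule.span_le]
    rintro _ ⟨v, rfl⟩
    -- expand v in the basis
    have hv : ∀ i, v i = ∑ k, b.repr (v i) k • b k := fun i => (b.sum_repr (v i)).symm
    have hexp : ιMulti R r v =
        ∑ g ∈ Fintype.piFinset (fun _ : Fin r => (Finset.univ : Finset (Fin n))),
          (ιMulti R r : M [⋀^Fin r]→ₗ[R] _) fun i => b.repr (v i) (g i) • b (g i) := by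
      conv_lhs => rw [show v = fun i => ∑ k ∈ Finset.univ, b.repr (v i) k • b k from funext hv]
      exact (ιMulti R r).toMultilinearMap.map_sum_finset
        (fun i k => b.repr (v i) k • b k) (fun _ => Finset.univ)
    rw [hexp]
    apply Submodule.sum_mem
    intro g _
    have hsmul : ((ιMulti R r : M [⋀^Fin r]→ₗ[R] _) fun i => b.repr (v i) (g i) • b (g i))
        = (∏ i, b.repr (v i) (g i)) • ιMulti R r (fun i => b (g i)) :=
      MultilinearMap.map_smul_univ _ _ _
    rw [hsmul]
    apply Submodule.smul_mem
    by_cases hg : Function.Injective g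
    · -- sort
      set s : Finset (Fin n) := Finset.univ.image g with hs
      have hcard : s.card = r := by
        rw [hs, Finset.card_image_of_injective _ hg, Finset.card_univ, Fintype.card_fin]
      set S : {s : Finset (Fin n) // s.card = r} := ⟨s, hcard⟩ with hS
      have hmem : ∀ i, g i ∈ s := fun i => Finset.mem_image_of_mem g (Finset.mem_univ i)
      -- the permutation
      set e : Fin r ≃o s := s.orderIsoOfFin hcard with he
      have hinj : Function.Injective (fun i => e.symm ⟨g i, hmem i⟩) :=
        fun x y h => hg (Subtype.ext_iff.mp (e.symm.injective h))
      set σ : Equiv.Perm (Fin r) :=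
        Equiv.ofBijective _ (Finite.injective_iff_bijective.mp hinj) with hσ
      have hcomp : (fun i => b (g i)) = (b ∘ emb S) ∘ σ := by
        funext i
        simp only [Function.comp_apply]
        have hσi : σ i = e.symm ⟨g i, hmem i⟩ := rfl
        have : emb S (σ i) = g i := by
          show (s.orderEmbOfFin hcard) (σ i) = g i
          have h1 : (s.orderEmbOfFin hcard) (σ i) = (e (σ i) : Fin n) := by
            rw [Finset.orderEmbOfFin_apply]
            rfl
          rw [h1, hσi, OrderIso.apply_symm_apply]
        rw [this]
      rw [hcomp]
      have := AlternatingMap.map_perm (ιMulti R r (M := M)) (b ∘ emb S) σ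
      rw [this]
      apply Submodule.smul_mem
      exact Submodule.subset_span ⟨S, rfl⟩
    · obtain ⟨x, y, hgxy, hxy⟩ := Function.not_injective_iff.mp hg
      have : (fun i => b (g i)) x = (fun i => b (g i)) y := by simp [hgxy]
      rw [AlternatingMap.map_eq_zero_of_eq (ιMulti R r) (fun i => b (g i)) this hxy]
      exact Submodule.zero_mem _
/-- wedges as elements of the exterior power. -/
noncomputable def wedge (s : {s : Finset (Fin n) // s.card = r}) : ⋀[R]^r M :=
  ⟨wedgeAux b s, wedgeAux_mem b s⟩

lemma wedge_linearIndependent : LinearIndependent R (wedge b (r := r)) :=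
  LinearIndependent.of_comp (⋀[R]^r M).subtype (wedgeAux_linearIndependent b)

lemma wedge_span : ⊤ ≤ Submodule.span R (Set.range (wedge b (r := r))) := by
  intro x _
  have h1 : Submodule.map (⋀[R]^r M).subtype (Submodule.span R (Set.range (wedge b (r := r))))
      = Submodule.span R (Set.range (wedgeAux b (r := r))) := by
    rw [Submodule.map_span]
    congr 1
    ext y
    constructor
    · rintro ⟨_, ⟨s, rfl⟩, rfl⟩; exact ⟨s, rfl⟩
    · rintro ⟨s, rfl⟩; exact ⟨wedge b s, ⟨s, rfl⟩, rfl⟩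
  have h2 : (x : ExteriorAlgebra R M) ∈
      Submodule.map (⋀[R]^r M).subtype (Submodule.span R (Set.range (wedge b (r := r)))) := by
    rw [h1, span_wedgeAux]; exact x.2
  obtain ⟨y, hy, hyx⟩ := h2
  have : y = x := Subtype.ext hyx
  exact this ▸ hy

/-- The basis of the r-th exterior power. -/
noncomputable def wedgeBasis : Module.Basis {s : Finset (Fin n) // s.card = r} R (⋀[R]^r M) :=
  Module.Basis.mk (wedge_linearIndependent b) (wedge_span b)

lemma wedgeBasis_apply (s : {s : Finset (Fin n) // s.card = r}) :
    wedgeBasis b s = wedge b s := Module.Basis.mk_apply _ _ _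

lemma wedgeBasis_coord (s : {s : Finset (Fin n) // s.card = r}) :
    (wedgeBasis b).coord s = (dualFn b s) ∘ₗ (⋀[R]^r M).subtype := by
  apply Module.Basis.ext (wedgeBasis b)
  intro t
  rw [Module.Basis.coord_apply, Module.Basis.repr_self_apply, wedgeBasis_apply]
  show _ = dualFn b s (wedgeAux b t)
  rw [dualFn_wedge]
  simp [eq_comm]

/-- The r-th compound matrix. -/
noncomputable def compound (n r : ℕ) {R : Type*} [CommRing R] (A : Matrix (Fin n) (Fin n) R) :
    Matrix {s : Finset (Fin n) // s.card = r} {s : Finset (Fin n) // s.card = r} R :=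
  Matrix.of fun s t => (A.submatrix (emb s) (emb t)).det

/-- Key lemma: the matrix of the induced map on the exterior power is the compound matrix. -/
lemma toMatrix_exteriorPowerMap (f : M →ₗ[R] M) :
    LinearMap.toMatrix (wedgeBasis b) (wedgeBasis b) (exteriorPowerMap r f) =
      compound n r (LinearMap.toMatrix b b f) := by
  ext s t
  rw [LinearMap.toMatrix_apply]
  have h1 : (wedgeBasis b).repr (exteriorPowerMap r f (wedgeBasis b t)) s
      = dualFn b s ((exteriorPowerMap r f (wedgeBasis b t) : ExteriorAlgebra R M)) := by
    rw [← Module.Basis.coord_apply, wedgeBasis_coord]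
    rfl
  rw [h1, wedgeBasis_apply]
  have h2 : ((exteriorPowerMap r f (wedge b t) : ExteriorAlgebra R M))
      = ιMulti R r (f ∘ (b ∘ emb t)) := by
    show (ExteriorAlgebra.map f) (wedgeAux b t) = _
    rw [wedgeAux, map_apply_ιMulti]
  rw [h2, dualFn_ιMulti, dualAlt_apply]
  show _ = ((LinearMap.toMatrix b b f).submatrix (emb s) (emb t)).det
  rw [← Matrix.det_transpose ((LinearMap.toMatrix b b f).submatrix (emb s) (emb t))]
  congr 1
  ext i j
  simp [LinearMap.toMatrix_apply, Matrix.transpose_apply]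

lemma compound_map {S : Type*} [CommRing S] (φ : R →+* S) (A : Matrix (Fin n) (Fin n) R) :
    compound n r (A.map φ) = (compound n r A).map φ := by
  ext s t
  show ((A.map φ).submatrix (emb s) (emb t)).det = φ ((A.submatrix (emb s) (emb t)).det)
  rw [RingHom.map_det]
  rfl

lemma compound_diagonal (d : Fin n → R) :
    compound n r (Matrix.diagonal d) = Matrix.diagonal (fun s => ∏ k ∈ s.1, d k) := by
  ext s t
  by_cases h : s = t
  · subst h
    show ((Matrix.diagonal d).submatrix (emb s) (emb s)).det = _
    have : (Matrix.diagonal d).submatrix (emb s) (emb s) = Matrix.diagonal (fun i => d (emb s i)) := by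
      ext i j
      by_cases hij : i = j
      · simp [hij]
      · have : emb s i ≠ emb s j := fun hc => hij ((emb s).injective hc)
        simp [Matrix.diagonal_apply_ne _ this, Matrix.diagonal_apply_ne _ hij]
    rw [this, Matrix.det_diagonal, Matrix.diagonal_apply_eq]
    -- product over Fin r of d (emb s i) = product over s of d
    rw [← Finset.prod_attach s.1 d]
    apply Finset.prod_nbij' (fun i => ⟨emb s i, emb_mem s i⟩)
      (fun x => (s.1.orderIsoOfFin s.2).symm x)
    · intros; exact Finset.mem_attach _ _
    · intros; exact Finset.mem_univ _
    · intro i _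
      apply (s.1.orderIsoOfFin s.2).symm_apply_apply
    · intro x _
      apply Subtype.ext
      have h3 : (emb s) (((s.1).orderIsoOfFin s.2).symm x)
          = ((s.1.orderIsoOfFin s.2) (((s.1).orderIsoOfFin s.2).symm x) : Fin n) := by
        rw [emb, Finset.orderEmbOfFin_apply]; rfl
      show (emb s) (((s.1).orderIsoOfFin s.2).symm x) = (x : Fin n)
      rw [h3, OrderIso.apply_symm_apply]
    · intros; rfl
  · rw [Matrix.diagonal_apply_ne _ h]
    -- s ≠ t: some x in s not in t gives zero row
    have hne : (s.1 \ t.1).Nonempty := by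
      rw [Finset.sdiff_nonempty]
      intro hsub
      exact h (Subtype.ext (Finset.eq_of_subset_of_card_le hsub (by rw [s.2, t.2])))
    obtain ⟨x, hx⟩ := hne
    rw [Finset.mem_sdiff] at hx
    obtain ⟨i0, hi0⟩ : ∃ i0, emb s i0 = x := by
      have hr := Finset.range_orderEmbOfFin s.1 s.2
      have : x ∈ Set.range (s.1.orderEmbOfFin s.2) := by rw [hr]; exact_mod_cast hx.1
      exact this
    apply Matrix.det_eq_zero_of_row_eq_zero i0
    intro j
    show Matrix.diagonal d (emb s i0) (emb t j) = 0
    apply Matrix.diagonal_apply_ne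
    rw [hi0]
    exact fun hc => hx.2 (hc ▸ emb_mem t j)

/-- counting: number of r-subsets containing a fixed element. -/
lemma card_subsets_mem (hr : 1 ≤ r) (i : Fin n) :
    (Finset.univ.filter (fun s : {s : Finset (Fin n) // s.card = r} => i ∈ s.1)).card
      = (n - 1).choose (r - 1) := by
  classical
  have hc : (Finset.univ.erase i).card = n - 1 := by
    rw [Finset.card_erase_of_mem (Finset.mem_univ i), Finset.card_univ, Fintype.card_fin]
  rw [← hc, ← Finset.card_powersetCard (r - 1) (Finset.univ.erase i)]
  refine Finset.card_bij' (fun s _ => s.1.erase i)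
    (fun t ht => ⟨insert i t, ?_⟩) ?hi ?hj ?li ?ri
  · rw [Finset.mem_powersetCard] at ht
    rw [Finset.card_insert_of_notMem (fun hc => (Finset.mem_erase.mp (ht.1 hc)).1 rfl), ht.2]
    omega
  case hi =>
    intro s hs
    rw [Finset.mem_filter] at hs
    rw [Finset.mem_powersetCard]
    constructor
    · intro x hx
      rw [Finset.mem_erase] at hx ⊢
      exact ⟨hx.1, Finset.mem_univ x⟩
    · rw [Finset.card_erase_of_mem hs.2, s.2]
  case hj =>
    intro t ht
    rw [Finset.mem_filter]
    exact ⟨Finset.mem_univ _, Finset.mem_insert_self i t⟩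
  case li =>
    intro s hs
    rw [Finset.mem_filter] at hs
    apply Subtype.ext
    show insert i (s.1.erase i) = s.1
    rw [Finset.insert_erase hs.2]
  case ri =>
    intro t ht
    rw [Finset.mem_powersetCard] at ht
    show (insert i t).erase i = t
    rw [Finset.erase_insert (fun hc => (Finset.mem_erase.mp (ht.1 hc)).1 rfl)]

lemma prod_prod_subsets (hr : 1 ≤ r) (d : Fin n → R) :
    ∏ s : {s : Finset (Fin n) // s.card = r}, ∏ k ∈ s.1, d k
      = (∏ k, d k) ^ (n - 1).choose (r - 1) := by
  classical
  have h1 : ∀ s : {s : Finset (Fin n) // s.card = r},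
      ∏ k ∈ s.1, d k = ∏ k : Fin n, if k ∈ s.1 then d k else 1 := by
    intro s
    rw [Finset.prod_ite_mem, Finset.univ_inter]
  simp_rw [h1]
  rw [Finset.prod_comm]
  have h2 : ∀ y : Fin n, (∏ x : {s : Finset (Fin n) // s.card = r}, if y ∈ x.1 then d y else 1)
      = d y ^ ((Finset.univ.filter (fun x : {s : Finset (Fin n) // s.card = r} => y ∈ x.1)).card) := by
    intro y
    rw [Finset.prod_ite, Finset.prod_const, Finset.prod_const_one, mul_one]
  simp_rw [h2, card_subsets_mem hr]
  rw [Finset.prod_pow]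

lemma emb_surj (s : {s : Finset (Fin n) // s.card = r}) {x : Fin n} (hx : x ∈ s.1) :
    ∃ i, emb s i = x := by
  have hr := Finset.range_orderEmbOfFin s.1 s.2
  have : x ∈ Set.range (s.1.orderEmbOfFin s.2) := by rw [hr]; exact_mod_cast hx
  exact this
lemma transvection_apply (i j a b : Fin n) (c : R) :
    Matrix.transvection i j c a b
      = (if a = b then 1 else 0) + (if i = a ∧ j = b then c else 0) := by
  simp [Matrix.transvection, Matrix.one_apply, Matrix.single]

lemma compound_transvection_row_zero {i j : Fin n} (c : R)
    (s t : {s : Finset (Fin n) // s.card = r}) (x : Fin n)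
    (hx1 : x ∈ s.1) (hx2 : x ∉ t.1) (hxi : x ≠ i) :
    compound n r (Matrix.transvection i j c) s t = 0 := by
  obtain ⟨i0, hi0⟩ := emb_surj s hx1
  apply Matrix.det_eq_zero_of_row_eq_zero i0
  intro b
  show Matrix.transvection i j c (emb s i0) (emb t b) = 0
  rw [hi0, transvection_apply]
  have h1 : x ≠ emb t b := fun hc => hx2 (hc ▸ emb_mem t b)
  have h2 : ¬(i = x ∧ j = emb t b) := fun hc => hxi hc.1.symm
  simp [h1, h2]

lemma compound_transvection_col_zero {i j : Fin n} (c : R)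
    (s t : {s : Finset (Fin n) // s.card = r}) (y : Fin n)
    (hy1 : y ∈ t.1) (hy2 : y ∉ s.1) (hyj : y ≠ j) :
    compound n r (Matrix.transvection i j c) s t = 0 := by
  obtain ⟨j0, hj0⟩ := emb_surj t hy1
  apply Matrix.det_eq_zero_of_column_eq_zero j0
  intro a
  show Matrix.transvection i j c (emb s a) (emb t j0) = 0
  rw [hj0, transvection_apply]
  have h1 : emb s a ≠ y := fun hc => hy2 (hc ▸ emb_mem s a)
  have h2 : ¬(i = emb s a ∧ j = y) := fun hc => hyj hc.2.symm
  simp [h1, h2]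

lemma compound_transvection_diag {i j : Fin n} (hij : i ≠ j) (c : R)
    (s : {s : Finset (Fin n) // s.card = r}) :
    compound n r (Matrix.transvection i j c) s s = 1 := by
  by_cases hmem : i ∈ s.1 ∧ j ∈ s.1
  · obtain ⟨a0, ha0⟩ := emb_surj s hmem.1
    obtain ⟨b0, hb0⟩ := emb_surj s hmem.2
    have hab : a0 ≠ b0 := fun hc => hij (by rw [← ha0, ← hb0, hc])
    have : (Matrix.transvection i j c).submatrix (emb s) (emb s)
        = Matrix.transvection a0 b0 c := by
      ext a b
      show Matrix.transvection i j c (emb s a) (emb s b) = _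
      rw [transvection_apply, transvection_apply]
      congr 1
      · congr 1
        simp only [eq_iff_iff]
        exact ⟨fun h => (emb s).injective h, fun h => h ▸ rfl⟩
      · congr 1
        simp only [eq_iff_iff]
        constructor
        · rintro ⟨h1, h2⟩
          exact ⟨(emb s).injective (by rw [ha0, h1]), (emb s).injective (by rw [hb0, h2])⟩
        · rintro ⟨h1, h2⟩
          exact ⟨by rw [← h1, ha0], by rw [← h2, hb0]⟩
    show ((Matrix.transvection i j c).submatrix (emb s) (emb s)).det = 1
    rw [this, Matrix.det_transvection_of_ne _ _ hab]
  · have : (Matrix.transvection i j c).submatrix (emb s) (emb s) = 1 := by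
      ext a b
      show Matrix.transvection i j c (emb s a) (emb s b) = _
      rw [transvection_apply]
      have h2 : ¬(i = emb s a ∧ j = emb s b) := by
        rintro ⟨h1, h2⟩
        exact hmem ⟨h1 ▸ emb_mem s a, h2 ▸ emb_mem s b⟩
      rw [if_neg h2, add_zero, Matrix.one_apply]
      congr 1
      simp only [eq_iff_iff]
      exact ⟨fun h => (emb s).injective h, fun h => h ▸ rfl⟩
    show ((Matrix.transvection i j c).submatrix (emb s) (emb s)).det = 1
    rw [this, Matrix.det_one]

/-- weight function -/
def wt (s : {s : Finset (Fin n) // s.card = r}) : ℕ := ∑ k ∈ s.1, (k : ℕ)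

lemma compound_transvection_struct {i j : Fin n} (hij : i ≠ j) (c : R)
    (s t : {s : Finset (Fin n) // s.card = r}) (hst : s ≠ t)
    (hT : compound n r (Matrix.transvection i j c) s t ≠ 0) :
    s.1 \ t.1 = {i} ∧ t.1 \ s.1 = {j} := by
  have hsub1 : s.1 \ t.1 ⊆ {i} := by
    intro x hx
    rw [Finset.mem_sdiff] at hx
    rw [Finset.mem_singleton]
    by_contra hxi
    exact hT (compound_transvection_row_zero c s t x hx.1 hx.2 hxi)
  have hsub2 : t.1 \ s.1 ⊆ {j} := by
    intro y hy
    rw [Finset.mem_sdiff] at hy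
    rw [Finset.mem_singleton]
    by_contra hyj
    exact hT (compound_transvection_col_zero c s t y hy.1 hy.2 hyj)
  have hne1 : (s.1 \ t.1).Nonempty := by
    rw [Finset.sdiff_nonempty]
    intro hsub
    exact hst (Subtype.ext (Finset.eq_of_subset_of_card_le hsub (by rw [s.2, t.2])))
  have hne2 : (t.1 \ s.1).Nonempty := by
    rw [Finset.sdiff_nonempty]
    intro hsub
    exact hst (Subtype.ext (Finset.eq_of_subset_of_card_le hsub (by rw [s.2, t.2])).symm)
  constructor
  · rcases Finset.subset_singleton_iff.mp hsub1 with h | h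
    · exact absurd h (Finset.nonempty_iff_ne_empty.mp hne1)
    · exact h
  · rcases Finset.subset_singleton_iff.mp hsub2 with h | h
    · exact absurd h (Finset.nonempty_iff_ne_empty.mp hne2)
    · exact h

lemma compound_transvection_wt {i j : Fin n} (hij : i < j) (c : R)
    (s t : {s : Finset (Fin n) // s.card = r}) (hst : s ≠ t)
    (hT : compound n r (Matrix.transvection i j c) s t ≠ 0) :
    wt s < wt t := by
  obtain ⟨h1, h2⟩ := compound_transvection_struct (ne_of_lt hij) c s t hst hT
  have e1 : wt s = ∑ k ∈ s.1 ∩ t.1, (k : ℕ) + (i : ℕ) := by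
    rw [wt, ← Finset.sum_inter_add_sum_sdiff s.1 t.1 (fun k => (k : ℕ)), h1,
      Finset.sum_singleton]
  have e2 : wt t = ∑ k ∈ s.1 ∩ t.1, (k : ℕ) + (j : ℕ) := by
    rw [wt, ← Finset.sum_inter_add_sum_sdiff t.1 s.1 (fun k => (k : ℕ)), h2,
      Finset.sum_singleton, Finset.inter_comm]
  rw [e1, e2]
  exact Nat.add_lt_add_left hij _

lemma det_compound_transvection_lt {i j : Fin n} (hij : i < j) (c : R) :
    (compound n r (Matrix.transvection i j c)).det = 1 := by
  classical
  have hbt : (compound n r (Matrix.transvection i j c)).BlockTriangular wt := by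
    intro s t hlt
    by_contra hT
    rcases eq_or_ne s t with h | h
    · subst h; exact lt_irrefl _ hlt
    · exact absurd (compound_transvection_wt hij c s t h hT) (by omega)
  rw [hbt.det]
  apply Finset.prod_eq_one
  intro a _
  have : (compound n r (Matrix.transvection i j c)).toSquareBlock wt a = 1 := by
    ext s t
    rcases eq_or_ne s t with h | h
    · subst h
      show compound n r (Matrix.transvection i j c) s.1 s.1 = _
      rw [compound_transvection_diag (ne_of_lt hij) c, Matrix.one_apply_eq]
    · have hst : s.1 ≠ t.1 := fun hc => h (Subtype.ext hc)
      show compound n r (Matrix.transvection i j c) s.1 t.1 = (1 : Matrix _ _ R) s t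
      rw [Matrix.one_apply_ne h]
      by_contra hT
      have hwlt := compound_transvection_wt hij c s.1 t.1 hst hT
      rw [s.2, t.2] at hwlt
      exact lt_irrefl _ hwlt
  rw [this, Matrix.det_one]

lemma compound_transpose (A : Matrix (Fin n) (Fin n) R) :
    compound n r A.transpose = (compound n r A).transpose := by
  ext s t
  show (A.transpose.submatrix (emb s) (emb t)).det = (A.submatrix (emb t) (emb s)).det
  rw [← Matrix.transpose_submatrix, Matrix.det_transpose]

lemma transvection_transpose (i j : Fin n) (c : R) :
    (Matrix.transvection i j c).transpose = Matrix.transvection j i c := by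
  ext a b
  rw [Matrix.transpose_apply, transvection_apply, transvection_apply]
  congr 1
  · simp [eq_comm]
  · simp [and_comm]

lemma det_compound_transvection {i j : Fin n} (hij : i ≠ j) (c : R) :
    (compound n r (Matrix.transvection i j c)).det = 1 := by
  rcases lt_or_gt_of_ne hij with h | h
  · exact det_compound_transvection_lt h c
  · rw [← Matrix.det_transpose, ← compound_transpose, transvection_transpose]
    exact det_compound_transvection_lt h c


lemma compound_mul {R : Type*} [CommRing R] (A B : Matrix (Fin n) (Fin n) R) :
    compound n r (A * B) = compound n r A * compound n r B := by
  let b : Module.Basis (Fin n) R (Fin n → R) := Pi.basisFun R (Fin n)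
  have hAB : A * B = LinearMap.toMatrix b b ((Matrix.toLin b b A) ∘ₗ (Matrix.toLin b b B)) := by
    rw [LinearMap.toMatrix_comp b b b, LinearMap.toMatrix_toLin, LinearMap.toMatrix_toLin]
  rw [hAB, ← toMatrix_exteriorPowerMap b, exteriorPowerMap_comp,
    LinearMap.toMatrix_comp (wedgeBasis b) (wedgeBasis b) (wedgeBasis b),
    toMatrix_exteriorPowerMap b, toMatrix_exteriorPowerMap b,
    LinearMap.toMatrix_toLin, LinearMap.toMatrix_toLin]

lemma det_compound_field {K : Type*} [Field K] (hr : 1 ≤ r) (A : Matrix (Fin n) (Fin n) K) :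
    (compound n r A).det = A.det ^ (n - 1).choose (r - 1) := by
  apply Matrix.diagonal_transvection_induction
    (P := fun A => (compound n r A).det = A.det ^ (n - 1).choose (r - 1))
  · intro D _
    rw [compound_diagonal, Matrix.det_diagonal, Matrix.det_diagonal, prod_prod_subsets hr]
  · intro t
    show (compound n r (Matrix.transvection t.i t.j t.c)).det = _
    rw [det_compound_transvection t.hij t.c]
    rw [show t.toMatrix.det = 1 from t.det, one_pow]
  · intro A B hA hB
    rw [compound_mul, Matrix.det_mul, hA, hB, Matrix.det_mul, mul_pow]

lemma det_compound {R : Type*} [CommRing R] (hr : 1 ≤ r) (A : Matrix (Fin n) (Fin n) R) :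
    (compound n r A).det = A.det ^ (n - 1).choose (r - 1) := by
  classical
  let σR := MvPolynomial (Fin n × Fin n) ℤ
  let K := FractionRing σR
  let φ : σR →+* K := algebraMap σR K
  have hφ : Function.Injective φ := IsFractionRing.injective σR K
  set A₀ : Matrix (Fin n) (Fin n) σR := Matrix.mvPolynomialX (Fin n) (Fin n) ℤ with hA₀
  have hgen : (compound n r A₀).det = A₀.det ^ (n - 1).choose (r - 1) := by
    apply hφ
    rw [RingHom.map_det, RingHom.mapMatrix_apply, ← compound_map, det_compound_field hr, map_pow, RingHom.map_det, RingHom.mapMatrix_apply]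
  let ψ : σR →+* R := MvPolynomial.eval₂Hom (Int.castRingHom R) (fun p => A p.1 p.2)
  have hA : A₀.map ψ = A := by
    have := Matrix.mvPolynomialX_map_eval₂ (Int.castRingHom R) A
    rwa [← MvPolynomial.coe_eval₂Hom] at this
  calc (compound n r A).det = ψ ((compound n r A₀).det) := by
        rw [RingHom.map_det, RingHom.mapMatrix_apply, ← compound_map, hA]
      _ = ψ (A₀.det ^ (n - 1).choose (r - 1)) := by rw [hgen]
      _ = A.det ^ (n - 1).choose (r - 1) := by rw [map_pow, RingHom.map_det, RingHom.mapMatrix_apply, hA]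

end SylFr

theorem stmt2 {R M : Type*} [CommRing R] [AddCommGroup M] [Module R M]
    (n r : ℕ) (hr1 : 1 ≤ r) (hrn : r ≤ n)
    (b : Module.Basis (Fin n) R M) (f : M →ₗ[R] M) :
    LinearMap.det (exteriorPowerMap r f) = (LinearMap.det f) ^ Nat.choose (n - 1) (r - 1) := by
  rw [← LinearMap.det_toMatrix (SylFr.wedgeBasis b), SylFr.toMatrix_exteriorPowerMap,
    SylFr.det_compound hr1, LinearMap.det_toMatrix]
end

section
/- Let R be a commutative ring with 1, let M be an R-module, let n ≥ 1 be an integer, and let k ≥ 1 be an EVEN integer. There is a well-defined R-linear map φ_{n,k} : Sym^n(Sym^k M) → Sym^k(⋀^n M) sending, for any elements a_{ij} ∈ M (1 ≤ i ≤ n, 1 ≤ j ≤ k), the element (a_{11}·⋯·a_{1k})·(a_{21}·⋯·a_{2k})·⋯·(a_{n1}·⋯·a_{nk}) to the sum over all permutations σ₂, …, σ_n ∈ S_k of the product, over i = 1, …, k, of the elements (a_{1i} ∧ a_{2σ₂(i)} ∧ ⋯ ∧ a_{nσ_n(i)}) of ⋀^n M, the outer product being taken in Sym^k(⋀^n M).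 -/
open scoped TensorProduct

open PiTensorProduct


namespace StmtAux

variable {R : Type*} [CommRing R]

section compML

variable {ι κ M A B : Type*} [AddCommGroup M] [Module R M]
  [AddCommGroup A] [Module R A] [AddCommGroup B] [Module R B]

private lemma update_rows {ι κ M A : Type*} [AddCommGroup M] [AddCommGroup A]
    [DecidableEq (ι × κ)] [DecidableEq ι] [DecidableEq κ]
    (f : (κ → M) → A) (c : ι × κ → M) (i₀ : ι) (j₀ : κ) (z : M) :
    (fun i => f fun j => Function.update c (i₀, j₀) z (i, j)) =
      Function.update (fun i => f fun j => c (i, j)) i₀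
        (f (Function.update (fun j => c (i₀, j)) j₀ z)) := by
  funext i
  rcases eq_or_ne i i₀ with rfl | hi
  · rw [Function.update_self]
    congr 1
    funext j
    rcases eq_or_ne j j₀ with rfl | hj
    · rw [Function.update_self, Function.update_self]
    · rw [Function.update_of_ne hj, Function.update_of_ne (by simp [hj])]
  · rw [Function.update_of_ne hi]
    congr 1
    funext j
    rw [Function.update_of_ne (by simp [hi])]

/-- Composite multilinear map on a product index type. -/
def compML (g : MultilinearMap R (fun _ : ι => A) B) (f : MultilinearMap R (fun _ : κ => M) A) :
    MultilinearMap R (fun _ : ι × κ => M) B where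
  toFun c := g fun i => f fun j => c (i, j)
  map_update_add' := by
    intro dec c p x y
    letI := Classical.decEq ι; letI := Classical.decEq κ
    obtain ⟨i₀, j₀⟩ := p
    rw [update_rows (fun v => f v), update_rows (fun v => f v), update_rows (fun v => f v),
      f.map_update_add, g.map_update_add]
  map_update_smul' := by
    intro dec c p r x
    letI := Classical.decEq ι; letI := Classical.decEq κ
    obtain ⟨i₀, j₀⟩ := p
    rw [update_rows (fun v => f v), update_rows (fun v => f v),
      f.map_update_smul, g.map_update_smul]

@[simp] lemma compML_apply (g : MultilinearMap R (fun _ : ι => A) B)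
    (f : MultilinearMap R (fun _ : κ => M) A) (c : ι × κ → M) :
    compML g f c = g fun i => f fun j => c (i, j) := rfl

end compML

end StmtAux

namespace StmtAux

variable {R : Type*} [CommRing R]

section Ext

variable {n k' : ℕ} {M E : Type*} [AddCommGroup M] [Module R M] [AddCommGroup E] [Module R E]

/-- Two multilinear maps on powers of a tensor power agree if they agree on tuples of
pure tensors. -/
theorem mlExt (A B : MultilinearMap R (fun _ : Fin n => ⨂[R]^k' M) E)
    (h : ∀ a : Fin n → Fin k' → M,
      A (fun j => tprod R (a j)) = B (fun j => tprod R (a j))) : A = B := by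
  classical
  have main : ∀ s : Finset (Fin n), ∀ t : Fin n → ⨂[R]^k' M,
      (∀ j ∉ s, ∃ v : Fin k' → M, t j = tprod R v) → A t = B t := by
    intro s
    induction s using Finset.induction_on with
    | empty =>
      intro t ht
      choose v hv using fun j => ht j (Finset.notMem_empty j)
      have htv : t = fun j => tprod R (v j) := funext hv
      rw [htv]; exact h v
    | @insert a s ha ih =>
      intro t ht
      have hAB : ∀ y ∈ Submodule.span R
          (Set.range (tprod R (s := fun _ : Fin k' => M))),
          A (Function.update t a y) = B (Function.update t a y) := by
        intro y hy
        induction hy using Submodule.span_induction with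
        | mem y hy =>
          obtain ⟨v, rfl⟩ := hy
          apply ih
          intro j hj
          rcases eq_or_ne j a with rfl | hja
          · exact ⟨v, (Function.update_self _ _ _)⟩
          · rw [Function.update_of_ne hja]
            exact ht j (by simp [hja, hj])
        | zero => rw [A.map_update_zero, B.map_update_zero]
        | add x y _ _ hx hy => rw [A.map_update_add, B.map_update_add, hx, hy]
        | smul c x _ hx => rw [A.map_update_smul, B.map_update_smul, hx]
      have hta := hAB (t a) (by rw [PiTensorProduct.span_tprod_eq_top]; trivial)
      simpa [Function.update_eq_self] using hta
  exact MultilinearMap.ext fun t =>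
    main Finset.univ t (fun j hj => absurd (Finset.mem_univ j) hj)

end Ext

section Descend

variable {n : ℕ} {T E : Type*} [AddCommGroup T] [Module R T] [AddCommGroup E] [Module R E]
  (N : Submodule R T)

theorem welldef (F : MultilinearMap R (fun _ : Fin n => T) E)
    (hF : ∀ (t : Fin n → T) (j : Fin n), t j ∈ N → F t = 0)
    (v w : Fin n → T) (hvw : ∀ j, N.mkQ (v j) = N.mkQ (w j)) : F v = F w := by
  classical
  have main : ∀ s : Finset (Fin n), ∀ v w : Fin n → T,
      (∀ j, N.mkQ (v j) = N.mkQ (w j)) → (∀ j ∉ s, v j = w j) → F v = F w := by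
    intro s
    induction s using Finset.induction_on with
    | empty =>
      intro v w _ h
      exact congrArg F (funext fun j => h j (Finset.notMem_empty j))
    | @insert a s ha ih =>
      intro v w hq hout
      have hd : v a - w a ∈ N := by
        have := hq a
        rwa [Submodule.mkQ_apply, Submodule.mkQ_apply, Submodule.Quotient.eq] at this
      have h1 : F v = F (Function.update v a (w a)) := by
        have hsplit : v a = w a + (v a - w a) := by abel
        calc F v = F (Function.update v a (v a)) := by rw [Function.update_eq_self]
          _ = F (Function.update v a (w a + (v a - w a))) := by rw [← hsplit]
          _ = F (Function.update v a (w a)) + F (Function.update v a (v a - w a)) :=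
              F.map_update_add ..
          _ = F (Function.update v a (w a)) := by
              rw [hF (Function.update v a (v a - w a)) a
                (by rw [Function.update_self]; exact hd), add_zero]
      rw [h1]
      apply ih
      · intro j
        rcases eq_or_ne j a with rfl | hja
        · rw [Function.update_self]
        · rw [Function.update_of_ne hja]; exact hq j
      · intro j hj
        rcases eq_or_ne j a with rfl | hja
        · rw [Function.update_self]
        · rw [Function.update_of_ne hja]; exact hout j (by simp [hja, hj])
  exact main Finset.univ v w hvw (fun j hj => absurd (Finset.mem_univ j) hj)

/-- Descend a multilinear map vanishing on a submodule in each slot to the quotient. -/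
noncomputable def descend (F : MultilinearMap R (fun _ : Fin n => T) E)
    (hF : ∀ (t : Fin n → T) (j : Fin n), t j ∈ N → F t = 0) :
    MultilinearMap R (fun _ : Fin n => T ⧸ N) E where
  toFun q := F fun j => Function.surjInv N.mkQ_surjective (q j)
  map_update_add' := by
    classical
    intro dec q i x y
    have key : ∀ z : T ⧸ N, (fun j => Function.surjInv N.mkQ_surjective
        (Function.update q i z j)) =
        Function.update (fun j => Function.surjInv N.mkQ_surjective (q j)) i
          (Function.surjInv N.mkQ_surjective z) := by
      intro z
      funext j
      rcases eq_or_ne j i with rfl | hji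
      · rw [Function.update_self, Function.update_self]
      · rw [Function.update_of_ne hji, Function.update_of_ne hji]
    rw [key, key, key]
    have h1 : F (Function.update (fun j => Function.surjInv N.mkQ_surjective (q j)) i
        (Function.surjInv N.mkQ_surjective (x + y))) =
        F (Function.update (fun j => Function.surjInv N.mkQ_surjective (q j)) i
          (Function.surjInv N.mkQ_surjective x + Function.surjInv N.mkQ_surjective y)) := by
      apply welldef N F hF
      intro j
      rcases eq_or_ne j i with rfl | hji
      · rw [Function.update_self, Function.update_self, map_add,
          Function.surjInv_eq N.mkQ_surjective, Function.surjInv_eq N.mkQ_surjective,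
          Function.surjInv_eq N.mkQ_surjective]
      · rw [Function.update_of_ne hji, Function.update_of_ne hji]
    rw [h1, F.map_update_add]
  map_update_smul' := by
    classical
    intro dec q i c x
    have key : ∀ z : T ⧸ N, (fun j => Function.surjInv N.mkQ_surjective
        (Function.update q i z j)) =
        Function.update (fun j => Function.surjInv N.mkQ_surjective (q j)) i
          (Function.surjInv N.mkQ_surjective z) := by
      intro z
      funext j
      rcases eq_or_ne j i with rfl | hji
      · rw [Function.update_self, Function.update_self]
      · rw [Function.update_of_ne hji, Function.update_of_ne hji]
    rw [key, key]
    have h1 : F (Function.update (fun j => Function.surjInv N.mkQ_surjective (q j)) i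
        (Function.surjInv N.mkQ_surjective (c • x))) =
        F (Function.update (fun j => Function.surjInv N.mkQ_surjective (q j)) i
          (c • Function.surjInv N.mkQ_surjective x)) := by
      apply welldef N F hF
      intro j
      rcases eq_or_ne j i with rfl | hji
      · rw [Function.update_self, Function.update_self, map_smul,
          Function.surjInv_eq N.mkQ_surjective, Function.surjInv_eq N.mkQ_surjective]
      · rw [Function.update_of_ne hji, Function.update_of_ne hji]
    rw [h1, F.map_update_smul]

theorem descend_mk (F : MultilinearMap R (fun _ : Fin n => T) E)
    (hF : ∀ (t : Fin n → T) (j : Fin n), t j ∈ N → F t = 0) (t : Fin n → T) :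
    descend N F hF (fun j => N.mkQ (t j)) = F t :=
  welldef N F hF _ t (fun j => Function.surjInv_eq N.mkQ_surjective _)

end Descend

end StmtAux

namespace StmtAux

variable {R : Type*} [CommRing R]

section LiftRows

variable (R) in
/-- Postcomposition with a linear map, as a linear map on multilinear maps. -/
def postcompL {ι : Type*} {M A B : Type*} [AddCommGroup M] [Module R M]
    [AddCommGroup A] [Module R A] [AddCommGroup B] [Module R B] (g : A →ₗ[R] B) :
    MultilinearMap R (fun _ : ι => M) A →ₗ[R] MultilinearMap R (fun _ : ι => M) B where
  toFun := g.compMultilinearMap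
  map_add' f₁ f₂ := by ext x; simp
  map_smul' c f := by ext x; simp

/-- Splitting off the first row of a rectangle. -/
def rowEquiv (m k' : ℕ) : (Fin (m + 1) × Fin k') ≃ (Fin k' ⊕ (Fin m × Fin k')) where
  toFun p := Fin.cases (Sum.inl p.2) (fun j => Sum.inr (j, p.2)) p.1
  invFun s := Sum.elim (fun i => (0, i)) (fun q => (q.1.succ, q.2)) s
  left_inv := by
    rintro ⟨j, i⟩
    induction j using Fin.cases <;> simp
  right_inv := by rintro (i | ⟨j, i⟩) <;> simp

variable (R) in
/-- Turn a multilinear map on an `m × k'` rectangle of variables into a multilinear map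
on `m` variables from the `k'`-th tensor power. -/
noncomputable def liftRows {M E : Type*} [AddCommGroup M] [Module R M]
    [AddCommGroup E] [Module R E] (k' : ℕ) :
    (m : ℕ) → MultilinearMap R (fun _ : Fin m × Fin k' => M) E →ₗ[R]
      MultilinearMap R (fun _ : Fin m => ⨂[R]^k' M) E
  | 0 =>
    { toFun := fun H => MultilinearMap.constOfIsEmpty R _ (H isEmptyElim)
      map_add' := by intros; ext; simp
      map_smul' := by intros; ext; simp }
  | (m + 1) =>
    (multilinearCurryLeftEquiv R (fun _ : Fin (m + 1) => ⨂[R]^k' M) E).symm.toLinearMap ∘ₗ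
      (PiTensorProduct.lift (s := fun _ : Fin k' => M)
        (E := MultilinearMap R (fun _ : Fin m => ⨂[R]^k' M) E)).toLinearMap ∘ₗ
      postcompL R (liftRows k' m) ∘ₗ
      (MultilinearMap.currySumEquiv (R := R) (ι := Fin k') (ι' := Fin m × Fin k') (M₂ := E) (N := fun _ => M)).toLinearMap ∘ₗ
      (MultilinearMap.domDomCongrLinearEquiv R R M E (rowEquiv m k')).toLinearMap

theorem liftRows_tprod {M E : Type*} [AddCommGroup M] [Module R M]
    [AddCommGroup E] [Module R E] (k' : ℕ) (m : ℕ)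
    (H : MultilinearMap R (fun _ : Fin m × Fin k' => M) E) (a : Fin m → Fin k' → M) :
    liftRows R k' m H (fun j => PiTensorProduct.tprod R (a j)) = H (fun p => a p.1 p.2) := by
  induction m with
  | zero =>
    rw [liftRows]
    exact congrArg H (Subsingleton.elim _ _)
  | succ m ih =>
    rw [liftRows]
    simp only [LinearMap.coe_comp, Function.comp_apply, LinearEquiv.coe_coe]
    have hsymm : ∀ (f : (⨂[R]^k' M) →ₗ[R] MultilinearMap R (fun _ : Fin m => ⨂[R]^k' M) E)
        (v : Fin (m + 1) → ⨂[R]^k' M),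
        (multilinearCurryLeftEquiv R (fun _ : Fin (m + 1) => ⨂[R]^k' M) E).symm f v
          = f (v 0) (fun i => v i.succ) := fun f v => rfl
    rw [hsymm, PiTensorProduct.lift.tprod]
    have hpost : (postcompL R (liftRows R k' m))
        ((MultilinearMap.currySumEquiv (R := R) (ι := Fin k') (ι' := Fin m × Fin k') (M₂ := E) (N := fun _ => M))
          ((MultilinearMap.domDomCongrLinearEquiv R R M E (rowEquiv m k')) H)) (a 0)
        = liftRows R k' m ((H.domDomCongr (rowEquiv m k')).currySum (a 0)) := rfl
    rw [hpost, ih]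
    rw [MultilinearMap.currySum_apply, MultilinearMap.domDomCongr_apply]
    refine congrArg H (funext fun q => ?_)
    obtain ⟨j, i⟩ := q
    show Sum.elim (a 0) (fun p => a p.1.succ p.2) (rowEquiv m k' (j, i)) = a j i
    induction j using Fin.cases <;> simp [rowEquiv]

end LiftRows

end StmtAux

namespace StmtAux

section Main

variable {R : Type*} [CommRing R] {M : Type*} [AddCommGroup M] [Module R M]

variable (R M) in
/-- The wedge alternating map into the exterior power. -/
noncomputable def Walt (n : ℕ) : M [⋀^Fin n]→ₗ[R] ↥(⋀[R]^n M) :=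
  (ExteriorAlgebra.ιMulti R n).codRestrict (⋀[R]^n M)
    (fun v => ExteriorAlgebra.ιMulti_range R n (Set.mem_range_self v))

lemma Walt_apply (n : ℕ) (v : Fin n → M) : Walt R M n v = wedgeMk R v := rfl

variable (R) in
/-- The symmetric product as a multilinear map. -/
noncomputable def Smap (k : ℕ) (X : Type*) [AddCommGroup X] [Module R X] :
    MultilinearMap R (fun _ : Fin k => X) (SymPow R k X) :=
  (SymPow.mk R k X).compMultilinearMap (PiTensorProduct.tprod R)

lemma Smap_apply (k : ℕ) (X : Type*) [AddCommGroup X] [Module R X] (v : Fin k → X) :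
    Smap R k X v = SymPow.prod R v := rfl

lemma Smap_perm (k : ℕ) (X : Type*) [AddCommGroup X] [Module R X] (v : Fin k → X)
    (τ : Equiv.Perm (Fin k)) : Smap R k X (v ∘ τ) = Smap R k X v := by
  have hmem : (PiTensorProduct.tprod R v - PiTensorProduct.tprod R (v ∘ τ)) ∈ symRel R k X :=
    Submodule.subset_span ⟨τ, v, rfl⟩
  have h0 : SymPow.mk R k X (PiTensorProduct.tprod R v - PiTensorProduct.tprod R (v ∘ τ)) = 0 :=
    (Submodule.Quotient.mk_eq_zero _).2 hmem
  rw [map_sub] at h0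
  have : SymPow.mk R k X (PiTensorProduct.tprod R (v ∘ τ))
      = SymPow.mk R k X (PiTensorProduct.tprod R v) := by
    rw [eq_comm, ← sub_eq_zero]; exact h0
  simpa [Smap] using this

/-- Reindexing of a rectangle by a family of permutations of the columns. -/
def permEquiv {n k : ℕ} (σ : Fin n → Equiv.Perm (Fin k)) : (Fin k × Fin n) ≃ (Fin n × Fin k) where
  toFun p := (p.2, σ p.2 p.1)
  invFun q := ((σ q.1)⁻¹ q.2, q.1)
  left_inv := by rintro ⟨i, j⟩; simp
  right_inv := by rintro ⟨j, i⟩; simp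

variable (R M) in
/-- A single summand: the symmetric product of wedges along the columns, after permuting
each row by the corresponding permutation. -/
noncomputable def Tterm (n k : ℕ) (a : Fin n → Fin k → M) (σ : Fin n → Equiv.Perm (Fin k)) :
    SymPow R k ↥(⋀[R]^n M) :=
  Smap R k _ (fun i => Walt R M n (fun j => a j (σ j i)))

variable (R M) in
/-- The basic multilinear map on the `n × k` rectangle. -/
noncomputable def Fbase (n k : ℕ) (j0 : Fin n) :
    MultilinearMap R (fun _ : Fin n × Fin k => M) (SymPow R k ↥(⋀[R]^n M)) :=
  ∑ σ ∈ Finset.univ.filter (fun σ : Fin n → Equiv.Perm (Fin k) => σ j0 = 1),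
    ((compML (Smap R k _) (Walt R M n).toMultilinearMap).domDomCongr (permEquiv σ))

lemma Fbase_apply (n k : ℕ) (j0 : Fin n) (a : Fin n → Fin k → M) :
    Fbase R M n k j0 (fun p => a p.1 p.2) =
      ∑ σ ∈ Finset.univ.filter (fun σ : Fin n → Equiv.Perm (Fin k) => σ j0 = 1),
        Tterm R M n k a σ := by
  rw [Fbase, MultilinearMap.sum_apply]
  rfl

lemma Tterm_mul_right (n k : ℕ) (a : Fin n → Fin k → M) (σ : Fin n → Equiv.Perm (Fin k))
    (ρ : Equiv.Perm (Fin k)) : Tterm R M n k a (fun j => σ j * ρ) = Tterm R M n k a σ := by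
  calc Tterm R M n k a (fun j => σ j * ρ)
      = Smap R k _ ((fun i => Walt R M n (fun j => a j (σ j i))) ∘ ρ) := by
        rw [Tterm]
        congr 1
    _ = Tterm R M n k a σ := Smap_perm _ _ _ ρ


lemma sumT_shift (n k : ℕ) (a : Fin n → Fin k → M) (j1 : Fin n) (τ : Equiv.Perm (Fin k)) :
    ∑ σ ∈ Finset.univ.filter (fun σ : Fin n → Equiv.Perm (Fin k) => σ j1 = τ),
        Tterm R M n k a σ
      = ∑ σ ∈ Finset.univ.filter (fun σ : Fin n → Equiv.Perm (Fin k) => σ j1 = 1),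
          Tterm R M n k a σ := by
  refine Finset.sum_nbij' (fun σ => fun j => σ j * τ⁻¹) (fun σ => fun j => σ j * τ)
    ?_ ?_ ?_ ?_ ?_
  · intro σ hσ
    simp only [Finset.mem_filter, Finset.mem_univ, true_and] at hσ ⊢
    rw [hσ, mul_inv_cancel]
  · intro σ hσ
    simp only [Finset.mem_filter, Finset.mem_univ, true_and] at hσ ⊢
    rw [hσ, one_mul]
  · intro σ _; funext j; simp [mul_assoc]
  · intro σ _; funext j; simp [mul_assoc]
  · intro σ _
    rw [eq_comm]
    calc Tterm R M n k a (fun j => σ j * τ⁻¹)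
        = Tterm R M n k a (fun j => (σ j * τ⁻¹) * τ) :=
          (Tterm_mul_right n k a (fun j => σ j * τ⁻¹) τ).symm
      _ = Tterm R M n k a σ := by
          congr 1; funext j; simp [mul_assoc]

lemma sumT_swap (n k : ℕ) (a : Fin n → Fin k → M) (j1 j2 : Fin n) :
    ∑ σ ∈ Finset.univ.filter (fun σ : Fin n → Equiv.Perm (Fin k) => σ j1 = 1),
        Tterm R M n k a σ
      = ∑ σ ∈ Finset.univ.filter (fun σ : Fin n → Equiv.Perm (Fin k) => σ j2 = 1),
          Tterm R M n k a σ := by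
  refine Finset.sum_nbij' (fun σ => fun j => σ j * (σ j2)⁻¹) (fun σ => fun j => σ j * (σ j1)⁻¹)
    ?_ ?_ ?_ ?_ ?_
  · intro σ hσ
    simp only [Finset.mem_filter, Finset.mem_univ, true_and] at hσ ⊢
    rw [mul_inv_cancel]
  · intro σ hσ
    simp only [Finset.mem_filter, Finset.mem_univ, true_and] at hσ ⊢
    rw [mul_inv_cancel]
  · intro σ hσ
    simp only [Finset.mem_filter, Finset.mem_univ, true_and] at hσ
    funext j
    simp only [hσ, one_mul]
    group
  · intro σ hσ
    simp only [Finset.mem_filter, Finset.mem_univ, true_and] at hσ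
    funext j
    simp only [hσ, one_mul]
    group
  · intro σ _
    rw [eq_comm]
    calc Tterm R M n k a (fun j => σ j * (σ j2)⁻¹)
        = Tterm R M n k a (fun j => (σ j * (σ j2)⁻¹) * (σ j2)) :=
          (Tterm_mul_right n k a _ (σ j2)).symm
      _ = Tterm R M n k a σ := by
          congr 1; funext j; group

lemma row_invariance (n k : ℕ) (a : Fin n → Fin k → M) (j0 j1 : Fin n)
    (τ : Equiv.Perm (Fin k)) :
    ∑ σ ∈ Finset.univ.filter (fun σ : Fin n → Equiv.Perm (Fin k) => σ j0 = 1),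
        Tterm R M n k (Function.update a j1 (fun x => a j1 (τ x))) σ
      = ∑ σ ∈ Finset.univ.filter (fun σ : Fin n → Equiv.Perm (Fin k) => σ j0 = 1),
          Tterm R M n k a σ := by
  classical
  have hterm : ∀ σ : Fin n → Equiv.Perm (Fin k),
      Tterm R M n k (Function.update a j1 (fun x => a j1 (τ x))) σ
        = Tterm R M n k a (Function.update σ j1 (τ * σ j1)) := by
    intro σ
    rw [Tterm, Tterm]
    congr 1
    funext i
    congr 1
    funext j
    rcases eq_or_ne j j1 with rfl | hj
    · rw [Function.update_self, Function.update_self]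
      simp [Equiv.Perm.mul_apply]
    · rw [Function.update_of_ne hj, Function.update_of_ne hj]
  simp only [hterm]
  rcases eq_or_ne j1 j0 with rfl | hj10
  · -- shift the distinguished row
    have step : ∑ σ ∈ Finset.univ.filter
          (fun σ : Fin n → Equiv.Perm (Fin k) => σ j1 = 1),
          Tterm R M n k a (Function.update σ j1 (τ * σ j1))
        = ∑ σ ∈ Finset.univ.filter
            (fun σ : Fin n → Equiv.Perm (Fin k) => σ j1 = τ), Tterm R M n k a σ := by
      refine Finset.sum_nbij' (fun σ => Function.update σ j1 (τ * σ j1))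
        (fun σ => Function.update σ j1 (τ⁻¹ * σ j1)) ?_ ?_ ?_ ?_ ?_
      · intro σ hσ
        simp only [Finset.mem_filter, Finset.mem_univ, true_and] at hσ ⊢
        rw [Function.update_self, hσ, mul_one]
      · intro σ hσ
        simp only [Finset.mem_filter, Finset.mem_univ, true_and] at hσ ⊢
        rw [Function.update_self, hσ, inv_mul_cancel]
      · intro σ _
        funext j
        rcases eq_or_ne j j1 with rfl | hj
        · rw [Function.update_self, Function.update_self]; group
        · rw [Function.update_of_ne hj, Function.update_of_ne hj]
      · intro σ _
        funext j
        rcases eq_or_ne j j1 with rfl | hj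
        · rw [Function.update_self, Function.update_self]; group
        · rw [Function.update_of_ne hj, Function.update_of_ne hj]
      · intro σ _; rfl
    rw [step, sumT_shift]
  · refine Finset.sum_nbij' (fun σ => Function.update σ j1 (τ * σ j1))
      (fun σ => Function.update σ j1 (τ⁻¹ * σ j1)) ?_ ?_ ?_ ?_ ?_
    · intro σ hσ
      simp only [Finset.mem_filter, Finset.mem_univ, true_and] at hσ ⊢
      rw [Function.update_of_ne (Ne.symm hj10)]; exact hσ
    · intro σ hσ
      simp only [Finset.mem_filter, Finset.mem_univ, true_and] at hσ ⊢
      rw [Function.update_of_ne (Ne.symm hj10)]; exact hσ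
    · intro σ _
      funext j
      rcases eq_or_ne j j1 with rfl | hj
      · rw [Function.update_self, Function.update_self]; group
      · rw [Function.update_of_ne hj, Function.update_of_ne hj]
    · intro σ _
      funext j
      rcases eq_or_ne j j1 with rfl | hj
      · rw [Function.update_self, Function.update_self]; group
      · rw [Function.update_of_ne hj, Function.update_of_ne hj]
    · intro σ _; rfl


lemma outer_invariance (n k : ℕ) (hkeven : Even k) (a : Fin n → Fin k → M) (j0 : Fin n)
    (π : Equiv.Perm (Fin n)) :
    ∑ σ ∈ Finset.univ.filter (fun σ : Fin n → Equiv.Perm (Fin k) => σ j0 = 1),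
        Tterm R M n k (fun j => a (π j)) σ
      = ∑ σ ∈ Finset.univ.filter (fun σ : Fin n → Equiv.Perm (Fin k) => σ j0 = 1),
          Tterm R M n k a σ := by
  classical
  have hterm : ∀ σ : Fin n → Equiv.Perm (Fin k),
      Tterm R M n k (fun j => a (π j)) σ = Tterm R M n k a (fun j => σ (π⁻¹ j)) := by
    intro σ
    rw [Tterm, Tterm]
    have hW : ∀ i : Fin k,
        Walt R M n (fun j => a (π j) (σ j i))
          = Equiv.Perm.sign π • Walt R M n (fun j => a j (σ (π⁻¹ j) i)) := by
      intro i
      have hmp := (Walt R M n).map_perm (fun j => a j (σ (π⁻¹ j) i)) π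
      rw [← hmp]
      congr 1
      funext j
      simp
    rcases Int.units_eq_one_or (Equiv.Perm.sign π) with h | h
    · simp only [hW, h, one_smul]
    · have hneg : ∀ x : ↥(⋀[R]^n M), (-1 : ℤˣ) • x = (-1 : R) • x := by
        intro x
        rw [Units.smul_def]
        simp only [Units.val_neg, Units.val_one, neg_one_zsmul]
        exact (neg_one_smul R x).symm
      simp only [hW, h, hneg]
      rw [MultilinearMap.map_smul_univ]
      simp [Finset.prod_const, hkeven.neg_one_pow]
  simp only [hterm]
  refine (Finset.sum_nbij' (fun σ => fun j => σ (π⁻¹ j)) (fun σ => fun j => σ (π j))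
    ?_ ?_ ?_ ?_ ?_).trans (sumT_swap n k a (π j0) j0)
  · intro σ hσ
    simp only [Finset.mem_filter, Finset.mem_univ, true_and] at hσ ⊢
    simpa using hσ
  · intro σ hσ
    simp only [Finset.mem_filter, Finset.mem_univ, true_and] at hσ ⊢
    simpa using hσ
  · intro σ _; funext j; simp
  · intro σ _; funext j; simp
  · intro σ _; rfl

variable (R M) in
/-- The multilinear map on `n` tensor-power slots. -/
noncomputable def FnD (n k : ℕ) (j0 : Fin n) :
    MultilinearMap R (fun _ : Fin n => ⨂[R]^k M) (SymPow R k ↥(⋀[R]^n M)) :=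
  liftRows R k n (Fbase R M n k j0)

lemma FnD_tprod (n k : ℕ) (j0 : Fin n) (a : Fin n → Fin k → M) :
    FnD R M n k j0 (fun j => PiTensorProduct.tprod R (a j)) =
      ∑ σ ∈ Finset.univ.filter (fun σ : Fin n → Equiv.Perm (Fin k) => σ j0 = 1),
        Tterm R M n k a σ := by
  rw [FnD, liftRows_tprod, Fbase_apply]

lemma FnD_swap (n k : ℕ) (j0 j : Fin n) (τ : Equiv.Perm (Fin k))
    (t : Fin n → ⨂[R]^k M) (v : Fin k → M) :
    FnD R M n k j0 (Function.update t j (PiTensorProduct.tprod R (v ∘ τ)))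
      = FnD R M n k j0 (Function.update t j (PiTensorProduct.tprod R v)) := by
  classical
  set Fn := FnD R M n k j0 with hFn
  set Pτ : (⨂[R]^k M) →ₗ[R] ⨂[R]^k M :=
    PiTensorProduct.lift ((PiTensorProduct.tprod R (s := fun _ : Fin k => M)).domDomCongr τ)
    with hPτdef
  have hPτ : ∀ w : Fin k → M,
      Pτ (PiTensorProduct.tprod R w) = PiTensorProduct.tprod R (w ∘ τ) := by
    intro w
    rw [hPτdef, PiTensorProduct.lift.tprod, MultilinearMap.domDomCongr_apply]
    rfl
  have hA : Fn.compLinearMap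
      (Function.update (fun _ : Fin n => (LinearMap.id : (⨂[R]^k M) →ₗ[R] ⨂[R]^k M)) j Pτ)
      = Fn := by
    apply mlExt
    intro a
    rw [MultilinearMap.compLinearMap_apply]
    have harg : (fun j' => Function.update
          (fun _ : Fin n => (LinearMap.id : (⨂[R]^k M) →ₗ[R] ⨂[R]^k M)) j Pτ j'
          (PiTensorProduct.tprod R (a j')))
        = fun j' => PiTensorProduct.tprod R
            (Function.update a j (fun x => a j (τ x)) j') := by
      funext j'
      rcases eq_or_ne j' j with rfl | hj'
      · rw [Function.update_self, Function.update_self, hPτ]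
        rfl
      · rw [Function.update_of_ne hj', Function.update_of_ne hj']
        rfl
    rw [harg, hFn, FnD_tprod, FnD_tprod]
    exact row_invariance n k a j0 j τ
  have happ := DFunLike.congr_fun hA (Function.update t j (PiTensorProduct.tprod R v))
  rw [MultilinearMap.compLinearMap_apply] at happ
  have harg2 : (fun j' => Function.update
        (fun _ : Fin n => (LinearMap.id : (⨂[R]^k M) →ₗ[R] ⨂[R]^k M)) j Pτ j'
        (Function.update t j (PiTensorProduct.tprod R v) j'))
      = Function.update t j (PiTensorProduct.tprod R (v ∘ τ)) := by
    funext j'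
    rcases eq_or_ne j' j with rfl | hj'
    · rw [Function.update_self, Function.update_self, Function.update_self, hPτ]
    · rw [Function.update_of_ne hj', Function.update_of_ne hj', Function.update_of_ne hj']
      rfl
  rw [harg2] at happ
  exact happ

lemma FnD_kill (n k : ℕ) (j0 : Fin n) (t : Fin n → ⨂[R]^k M) (j : Fin n)
    (hmem : t j ∈ symRel R k M) : FnD R M n k j0 t = 0 := by
  classical
  set Fn := FnD R M n k j0 with hFn
  let g : (⨂[R]^k M) →ₗ[R] SymPow R k ↥(⋀[R]^n M) :=
    { toFun := fun y => Fn (Function.update t j y)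
      map_add' := fun x y => Fn.map_update_add t j x y
      map_smul' := fun c x => Fn.map_update_smul t j c x }
  have hg : symRel R k M ≤ LinearMap.ker g := by
    rw [symRel, Submodule.span_le]
    rintro x ⟨τ, v, rfl⟩
    simp only [SetLike.mem_coe, LinearMap.mem_ker, map_sub]
    have h1 : g (PiTensorProduct.tprod R v) = Fn (Function.update t j (PiTensorProduct.tprod R v)) := rfl
    have h2 : g (PiTensorProduct.tprod R (v ∘ τ))
        = Fn (Function.update t j (PiTensorProduct.tprod R (v ∘ τ))) := rfl
    rw [h1, h2, FnD_swap n k j0 j τ t v, sub_self]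
  have h3 : Fn t = g (t j) := by
    have : g (t j) = Fn (Function.update t j (t j)) := rfl
    rw [this, Function.update_eq_self]
  rw [h3]
  exact LinearMap.mem_ker.1 (hg hmem)

lemma FnD_outer (n k : ℕ) (hkeven : Even k) (j0 : Fin n) (t : Fin n → ⨂[R]^k M)
    (π : Equiv.Perm (Fin n)) : FnD R M n k j0 (t ∘ π) = FnD R M n k j0 t := by
  have hA : (FnD R M n k j0).domDomCongr π = FnD R M n k j0 := by
    apply mlExt
    intro a
    rw [MultilinearMap.domDomCongr_apply]
    have h1 : (FnD R M n k j0) (fun i => (fun j => PiTensorProduct.tprod R (a j)) (π i))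
        = (FnD R M n k j0) (fun i => PiTensorProduct.tprod R ((fun j => a (π j)) i)) := rfl
    rw [h1, FnD_tprod, FnD_tprod]
    exact outer_invariance n k hkeven a j0 π
  have happ := DFunLike.congr_fun hA t
  rw [MultilinearMap.domDomCongr_apply] at happ
  exact happ

variable (R M) in
/-- The descended multilinear map on symmetric-power slots. -/
noncomputable def GD (n k : ℕ) (j0 : Fin n) :
    MultilinearMap R (fun _ : Fin n => SymPow R k M) (SymPow R k ↥(⋀[R]^n M)) :=
  descend (symRel R k M) (FnD R M n k j0) (fun t j h => FnD_kill n k j0 t j h)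

lemma GD_mk (n k : ℕ) (j0 : Fin n) (t : Fin n → ⨂[R]^k M) :
    GD R M n k j0 (fun j => SymPow.mk R k M (t j)) = FnD R M n k j0 t :=
  descend_mk (symRel R k M) (FnD R M n k j0) (fun t j h => FnD_kill n k j0 t j h) t

end Main

end StmtAux

theorem stmt6 {R M : Type*} [CommRing R] [AddCommGroup M] [Module R M]
    (n k : ℕ) (hn : 0 < n) (hk : 0 < k) (hkeven : Even k) :
    ∃ φ : SymPow R n (SymPow R k M) →ₗ[R] SymPow R k (⋀[R]^n M),
      ∀ a : Fin n → Fin k → M,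
        φ (SymPow.prod R fun i : Fin n => SymPow.prod R (a i)) =
          ∑ σ ∈ Finset.univ.filter
              (fun σ : Fin n → Equiv.Perm (Fin k) => σ ⟨0, hn⟩ = 1),
            SymPow.prod R (fun i : Fin k => wedgeMk R (fun j : Fin n => a j (σ j i))) := by
  classical
  set j0 : Fin n := ⟨0, hn⟩ with hj0
  set L : (⨂[R] (_ : Fin n), SymPow R k M) →ₗ[R] SymPow R k ↥(⋀[R]^n M) :=
    PiTensorProduct.lift (StmtAux.GD R M n k j0) with hL
  have hLker : symRel R n (SymPow R k M) ≤ LinearMap.ker L := by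
    rw [symRel, Submodule.span_le]
    rintro x ⟨π, q, rfl⟩
    simp only [SetLike.mem_coe, LinearMap.mem_ker, map_sub]
    choose t ht using fun j => (symRel R k M).mkQ_surjective (q j)
    have hq : q = fun j => SymPow.mk R k M (t j) := funext fun j => (ht j).symm
    rw [hL, PiTensorProduct.lift.tprod, PiTensorProduct.lift.tprod, hq]
    have e1 : StmtAux.GD R M n k j0 ((fun j => SymPow.mk R k M (t j)) ∘ π)
        = StmtAux.GD R M n k j0 (fun j => SymPow.mk R k M ((t ∘ π) j)) := rfl
    rw [e1, StmtAux.GD_mk, StmtAux.GD_mk, StmtAux.FnD_outer n k hkeven j0 t π, sub_self]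
  refine ⟨Submodule.liftQ _ L hLker, ?_⟩
  intro a
  have hmk : SymPow.prod R (fun i : Fin n => SymPow.prod R (a i))
      = Submodule.Quotient.mk (p := symRel R n (SymPow R k M))
          (PiTensorProduct.tprod R (fun i => SymPow.prod R (a i))) := rfl
  have hstep : (Submodule.liftQ _ L hLker) (SymPow.prod R fun i : Fin n => SymPow.prod R (a i))
      = L (PiTensorProduct.tprod R fun i => SymPow.prod R (a i)) := rfl
  refine hstep.trans ?_
  rw [hL, PiTensorProduct.lift.tprod]
  have e2 : StmtAux.GD R M n k j0 (fun i => SymPow.prod R (a i))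
      = StmtAux.GD R M n k j0 (fun i => SymPow.mk R k M (PiTensorProduct.tprod R (a i))) := rfl
  rw [e2, StmtAux.GD_mk, StmtAux.FnD_tprod]
  exact Finset.sum_congr rfl fun σ _ => rfl
end

section
/- Let R be a commutative ring with 1, let M be a free R-module of rank 2 with basis {x, y}, and let k ≥ 1. Then the canonical map φ_{k,2} : Sym^k(⋀²M) → Sym²(Sym^k M) satisfies φ_{k,2}((x∧y)^k) = Σ_{i=1}^{k} (−1)^{k−i}·C(k−1, i−1)·(x^i·y^{k−i})·(x^{k−i}·y^i), where x^i·y^{k−i} denotes the product of i copies of x and k−i copies of y in Sym^k M, (x∧y)^k the k-th power of x∧y in Sym^k(⋀²M), and C(k−1,i−1) = (k−1)!/((k−i)!·(i−1)!). -/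
open scoped TensorProduct

section Helpers

variable {R M : Type*} [CommRing R] [AddCommGroup M] [Module R M]

lemma SymPow.prod_comp {n : ℕ} (σ : Equiv.Perm (Fin n)) (v : Fin n → M) :
    SymPow.prod R (v ∘ σ) = SymPow.prod R v := by
  unfold SymPow.prod SymPow.mk
  rw [eq_comm]
  exact (Submodule.Quotient.eq _).2 (Submodule.subset_span ⟨σ, v, rfl⟩)

lemma prod_ite_sorted {k : ℕ} (p : Fin k → Prop) [DecidablePred p] (x y : M) :
    SymPow.prod R (fun j => if p j then x else y) =
    SymPow.prod R (fun t : Fin k => if (t : ℕ) < (Finset.univ.filter p).card then x else y) := by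
  set i := (Finset.univ.filter p).card with hi
  have hik : i ≤ k := by
    simpa using Finset.card_filter_le Finset.univ p
  have h1 : Fintype.card {t : Fin k // (t : ℕ) < i} = Fintype.card {j : Fin k // p j} := by
    have hA : Fintype.card {t : Fin k // (t : ℕ) < i} = i := by
      refine Eq.trans (Fintype.card_congr ?_) (Fintype.card_fin i)
      exact { toFun := fun t => ⟨t.1, t.2⟩
              invFun := fun s => ⟨⟨s.1, lt_of_lt_of_le s.2 hik⟩, s.2⟩
              left_inv := fun t => rfl
              right_inv := fun s => rfl }
    have hB : Fintype.card {j : Fin k // p j} = i := by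
      simp [Fintype.card_subtype, hi]
    rw [hA, hB]
  have h2 : Fintype.card {t : Fin k // ¬ (t : ℕ) < i} = Fintype.card {j : Fin k // ¬ p j} := by
    rw [Fintype.card_subtype_compl, Fintype.card_subtype_compl, h1]
  let e1 := Fintype.equivOfCardEq h1
  let e2 := Fintype.equivOfCardEq h2
  let σ : Equiv.Perm (Fin k) :=
    (Equiv.sumCompl (fun t : Fin k => (t : ℕ) < i)).symm.trans
      ((Equiv.sumCongr e1 e2).trans (Equiv.sumCompl p))
  have hσ : ∀ t : Fin k, p (σ t) ↔ (t : ℕ) < i := by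
    intro t
    by_cases h : (t : ℕ) < i
    · have h0 : (Equiv.sumCompl fun t : Fin k => (t : ℕ) < i).symm t = Sum.inl ⟨t, h⟩ :=
        Equiv.sumCompl_symm_apply_of_pos (p := fun t : Fin k => (t : ℕ) < i) (a := t) h
      have : σ t = e1 ⟨t, h⟩ := by simp [σ, h0]
      rw [this]
      simp [h, (e1 ⟨t, h⟩).2]
    · have h0 : (Equiv.sumCompl fun t : Fin k => (t : ℕ) < i).symm t = Sum.inr ⟨t, h⟩ :=
        Equiv.sumCompl_symm_apply_of_neg (p := fun t : Fin k => (t : ℕ) < i) (a := t) h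
      have : σ t = e2 ⟨t, h⟩ := by simp [σ, h0]
      rw [this]
      simp [h, (e2 ⟨t, h⟩).2]
  have : (fun j => if p j then x else y) ∘ σ =
      fun t : Fin k => if (t : ℕ) < i then x else y := by
    funext t
    simp only [Function.comp_apply]
    by_cases h : (t : ℕ) < i
    · rw [if_pos ((hσ t).2 h), if_pos h]
    · rw [if_neg (fun hp => h ((hσ t).1 hp)), if_neg h]
  rw [← this, SymPow.prod_comp]

lemma perm_two : ∀ π : Equiv.Perm (Fin 2), π = 1 ∨ π = Equiv.swap 0 1 := by decide

lemma sign_lemma {k : ℕ} (τ : Fin k → Equiv.Perm (Fin 2)) :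
    (∏ j : Fin k, (Equiv.Perm.sign (τ j) : ℤ)) =
    (-1) ^ (k - (Finset.univ.filter (fun j => τ j = 1)).card) := by
  have h : ∀ j, (Equiv.Perm.sign (τ j) : ℤ) = if τ j = 1 then 1 else -1 := by
    intro j
    rcases perm_two (τ j) with h | h <;>
      simp [h, Equiv.Perm.sign_swap (by decide : (0 : Fin 2) ≠ 1)]
  rw [Finset.prod_congr rfl (fun j _ => h j), Finset.prod_ite]
  rw [Finset.prod_const_one, one_mul, Finset.prod_const]
  congr 1
  have := Finset.card_filter_add_card_filter_not (s := Finset.univ)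
    (p := fun j : Fin k => τ j = 1)
  simp only [Finset.card_univ, Fintype.card_fin] at this
  omega

lemma count_lemma (k : ℕ) (hk : 0 < k) (i : ℕ) (hi : 1 ≤ i) :
    (Finset.filter
      (fun τ : Fin k → Equiv.Perm (Fin 2) =>
        (Finset.univ.filter (fun j => τ j = 1)).card = i)
      (Finset.univ.filter (fun τ : Fin k → Equiv.Perm (Fin 2) => τ ⟨0, hk⟩ = 1))).card
    = (k - 1).choose (i - 1) := by
  have swne : (Equiv.swap (0 : Fin 2) 1) ≠ 1 := by decide
  have hg : ∀ S : Finset (Fin k),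
      Finset.univ.filter (fun j =>
        (if j = ⟨0, hk⟩ ∨ j ∈ S then (1 : Equiv.Perm (Fin 2)) else Equiv.swap 0 1) = 1)
      = insert ⟨0, hk⟩ S := by
    intro S
    ext j
    by_cases h : j = ⟨0, hk⟩ ∨ j ∈ S <;>
      simp [Finset.mem_filter, Finset.mem_insert, h, swne] <;> tauto
  rw [show (k - 1).choose (i - 1)
      = ((Finset.univ.erase (⟨0, hk⟩ : Fin k)).powersetCard (i - 1)).card by
    rw [Finset.card_powersetCard, Finset.card_erase_of_mem (Finset.mem_univ _),
      Finset.card_univ, Fintype.card_fin]]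
  refine Finset.card_nbij'
    (fun τ => (Finset.univ.filter (fun j => τ j = 1)).erase ⟨0, hk⟩)
    (fun S j => if j = ⟨0, hk⟩ ∨ j ∈ S then 1 else Equiv.swap 0 1)
    ?_ ?_ ?_ ?_
  · intro τ hτ
    rw [Finset.mem_coe, Finset.mem_filter, Finset.mem_filter] at hτ
    obtain ⟨⟨-, h0⟩, hc⟩ := hτ
    dsimp only
    rw [Finset.mem_coe, Finset.mem_powersetCard]
    constructor
    · exact Finset.erase_subset_erase _ (Finset.subset_univ _)
    · have hm : (⟨0, hk⟩ : Fin k) ∈ Finset.univ.filter (fun j => τ j = 1) :=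
        Finset.mem_filter.2 ⟨Finset.mem_univ _, h0⟩
      rw [Finset.card_erase_of_mem hm, hc]
  · intro S hS
    rw [Finset.mem_coe, Finset.mem_powersetCard] at hS
    obtain ⟨hsub, hcard⟩ := hS
    have h0 : (⟨0, hk⟩ : Fin k) ∉ S := fun h => (Finset.mem_erase.1 (hsub h)).1 rfl
    rw [Finset.mem_coe, Finset.mem_filter, Finset.mem_filter]
    refine ⟨⟨Finset.mem_univ _, by simp⟩, ?_⟩
    rw [hg S, Finset.card_insert_of_notMem h0, hcard]
    omega
  · intro τ hτ
    rw [Finset.mem_coe, Finset.mem_filter, Finset.mem_filter] at hτ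
    obtain ⟨⟨-, h0⟩, -⟩ := hτ
    dsimp only
    funext j
    by_cases hj : j = ⟨0, hk⟩
    · rw [if_pos (Or.inl hj), hj, h0]
    · by_cases h1 : τ j = 1
      · rw [if_pos (Or.inr (Finset.mem_erase.2
          ⟨hj, Finset.mem_filter.2 ⟨Finset.mem_univ _, h1⟩⟩)), h1]
      · rw [if_neg (by simp [hj, Finset.mem_erase, Finset.mem_filter, h1])]
        rcases perm_two (τ j) with h | h
        · exact absurd h h1
        · exact h.symm
  · intro S hS
    rw [Finset.mem_coe, Finset.mem_powersetCard] at hS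
    have h0 : (⟨0, hk⟩ : Fin k) ∉ S := fun h => (Finset.mem_erase.1 (hS.1 h)).1 rfl
    dsimp only
    rw [hg S, Finset.erase_insert h0]

end Helpers

theorem stmt7 {R M : Type*} [CommRing R] [AddCommGroup M] [Module R M]
    (b : Module.Basis (Fin 2) R M) (k : ℕ) (hk : 0 < k)
    (φ : SymPow R k (⋀[R]^2 M) →ₗ[R] SymPow R 2 (SymPow R k M))
    (hφ : ∀ a : Fin k → Fin 2 → M,
      φ (SymPow.prod R fun j : Fin k => wedgeMk R (a j)) =
        ∑ τ ∈ Finset.univ.filter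
            (fun τ : Fin k → Equiv.Perm (Fin 2) => τ ⟨0, hk⟩ = 1),
          (∏ j : Fin k, (Equiv.Perm.sign (τ j) : ℤ)) •
            SymPow.prod R (fun i : Fin 2 => SymPow.prod R (fun j : Fin k => a j (τ j i)))) :
    φ (SymPow.prod R fun _ : Fin k => wedgeMk R ![b 0, b 1]) =
      ∑ i ∈ Finset.Icc 1 k,
        ((-1 : ℤ) ^ (k - i) * ((k - 1).choose (i - 1) : ℤ)) •
          SymPow.prod R
            ![SymPow.prod R (fun t : Fin k => if (t : ℕ) < i then b 0 else b 1),
              SymPow.prod R (fun t : Fin k => if (t : ℕ) < k - i then b 0 else b 1)] := by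
  rw [hφ]
  have hmaps : ∀ τ ∈ Finset.univ.filter
      (fun τ : Fin k → Equiv.Perm (Fin 2) => τ ⟨0, hk⟩ = 1),
      (Finset.univ.filter (fun j => τ j = 1)).card ∈ Finset.Icc 1 k := by
    intro τ hτ
    rw [Finset.mem_filter] at hτ
    refine Finset.mem_Icc.2 ⟨?_, ?_⟩
    · exact Finset.card_pos.2 ⟨⟨0, hk⟩, Finset.mem_filter.2 ⟨Finset.mem_univ _, hτ.2⟩⟩
    · simpa using Finset.card_filter_le Finset.univ (fun j : Fin k => τ j = 1)
  rw [← Finset.sum_fiberwise_of_maps_to hmaps]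
  refine Finset.sum_congr rfl fun i hi => ?_
  obtain ⟨hi1, hik⟩ := Finset.mem_Icc.1 hi
  have swne : (Equiv.swap (0 : Fin 2) 1) ≠ 1 := by decide
  have key : ∀ τ ∈ Finset.filter (fun τ : Fin k → Equiv.Perm (Fin 2) =>
      (Finset.univ.filter (fun j => τ j = 1)).card = i)
      (Finset.univ.filter (fun τ : Fin k → Equiv.Perm (Fin 2) => τ ⟨0, hk⟩ = 1)),
      (∏ j : Fin k, (Equiv.Perm.sign (τ j) : ℤ)) •
        SymPow.prod R (fun i' : Fin 2 =>
          SymPow.prod R (fun j : Fin k => ![b 0, b 1] (τ j i')))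
      = ((-1 : ℤ) ^ (k - i)) • SymPow.prod R
          ![SymPow.prod R (fun t : Fin k => if (t : ℕ) < i then b 0 else b 1),
            SymPow.prod R (fun t : Fin k => if (t : ℕ) < k - i then b 0 else b 1)] := by
    intro τ hτ
    rw [Finset.mem_filter] at hτ
    have hc : (Finset.univ.filter (fun j => τ j = 1)).card = i := hτ.2
    rw [sign_lemma, hc]
    congr 1
    have hf0 : (fun j : Fin k => ![b 0, b 1] (τ j 0))
        = fun j => if τ j = 1 then b 0 else b 1 := by
      funext j
      rcases perm_two (τ j) with h | h <;> simp [h, swne]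
    have hf1 : (fun j : Fin k => ![b 0, b 1] (τ j 1))
        = fun j => if ¬ τ j = 1 then b 0 else b 1 := by
      funext j
      rcases perm_two (τ j) with h | h <;> simp [h, swne]
    have hcn : (Finset.univ.filter (fun j => ¬ τ j = 1)).card = k - i := by
      have := Finset.card_filter_add_card_filter_not (s := Finset.univ)
        (p := fun j : Fin k => τ j = 1)
      simp only [Finset.card_univ, Fintype.card_fin] at this
      omega
    congr 1
    funext i'
    fin_cases i'
    · show SymPow.prod R (fun j : Fin k => ![b 0, b 1] (τ j 0)) = _
      rw [hf0, prod_ite_sorted, hc]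
      simp
    · show SymPow.prod R (fun j : Fin k => ![b 0, b 1] (τ j 1)) = _
      rw [hf1, prod_ite_sorted, hcn]
      simp
  rw [Finset.sum_congr rfl key, Finset.sum_const, count_lemma k hk i hi1]
  rw [← natCast_zsmul, smul_smul, mul_comm]
end

section
/- Let R be a commutative ring with 1, let M be a free R-module of rank 2 with basis {x, y}, and let k ≥ 2 be an even integer. Then the canonical map φ_{2,k} : Sym²(Sym^k M) → Sym^k(⋀²M) satisfies, for every 1 ≤ i ≤ k, φ_{2,k}((x^i·y^{k−i})·(x^{k−i}·y^i)) = (−1)^{k−i}·(k−i)!·i!·(x∧y)^k, where x^i·y^{k−i} denotes the product of i copies of x with k−i copies of y in Sym^k M and (x∧y)^k the k-th power of x∧y in Sym^k(⋀²M). -/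
open scoped TensorProduct

section Helpers

variable {R : Type*} [CommRing R] {M : Type*} [AddCommGroup M] [Module R M]

/-- permutations intertwining two predicates -/
def permIffEquiv {α : Type*} (p q : α → Prop) [DecidablePred p] [DecidablePred q] :
    {σ : Equiv.Perm α // ∀ t, (p t ↔ q (σ t))} ≃
      ({t // p t} ≃ {s // q s}) × ({t // ¬ p t} ≃ {s // ¬ q s}) where
  toFun σ :=
    (⟨fun t => ⟨σ.1 t.1, (σ.2 t.1).mp t.2⟩,
      fun s => ⟨σ.1.symm s.1, (σ.2 _).mpr (by rw [Equiv.apply_symm_apply]; exact s.2)⟩,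
      fun t => Subtype.ext (σ.1.symm_apply_apply t.1),
      fun s => Subtype.ext (σ.1.apply_symm_apply s.1)⟩,
     ⟨fun t => ⟨σ.1 t.1, fun hq => t.2 ((σ.2 t.1).mpr hq)⟩,
      fun s => ⟨σ.1.symm s.1, fun hp => s.2 (by
        have := (σ.2 (σ.1.symm s.1)).mp hp
        rwa [Equiv.apply_symm_apply] at this)⟩,
      fun t => Subtype.ext (σ.1.symm_apply_apply t.1),
      fun s => Subtype.ext (σ.1.apply_symm_apply s.1)⟩)
  invFun e :=
    ⟨(Equiv.sumCompl p).symm.trans ((e.1.sumCongr e.2).trans (Equiv.sumCompl q)), by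
      intro t
      by_cases h : p t
      · simp only [Equiv.trans_apply, Equiv.sumCompl_symm_apply_of_pos h,
          Equiv.sumCongr_apply, Sum.map_inl, Equiv.sumCompl_apply_inl]
        exact iff_of_true h (e.1 ⟨t, h⟩).2
      · simp only [Equiv.trans_apply, Equiv.sumCompl_symm_apply_of_neg h,
          Equiv.sumCongr_apply, Sum.map_inr, Equiv.sumCompl_apply_inr]
        exact iff_of_false h (e.2 ⟨t, h⟩).2⟩
  left_inv := by
    rintro ⟨σ, hσ⟩
    apply Subtype.ext
    apply Equiv.ext
    intro t
    by_cases h : p t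
    · simp [Equiv.sumCompl_symm_apply_of_pos h]
    · simp [Equiv.sumCompl_symm_apply_of_neg h]
  right_inv := by
    rintro ⟨e₁, e₂⟩
    apply Prod.ext
    · apply Equiv.ext
      rintro ⟨t, h⟩
      apply Subtype.ext
      simp [Equiv.sumCompl_symm_apply_of_pos h]
    · apply Equiv.ext
      rintro ⟨t, h⟩
      apply Subtype.ext
      simp [Equiv.sumCompl_symm_apply_of_neg h]

def finLtEquiv (k i : ℕ) (h : i ≤ k) : {t : Fin k // (t : ℕ) < i} ≃ Fin i where
  toFun t := ⟨t.1.1, t.2⟩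
  invFun j := ⟨⟨j.1, lt_of_lt_of_le j.2 h⟩, j.2⟩
  left_inv t := rfl
  right_inv j := rfl

def finGeEquiv (k i : ℕ) : {t : Fin k // ¬ (t : ℕ) < i} ≃ Fin (k - i) where
  toFun t := ⟨t.1.1 - i, by have h1 := t.1.2; have h2 := t.2; omega⟩
  invFun j := ⟨⟨j.1 + i, by have := j.2; omega⟩, by simp⟩
  left_inv t := Subtype.ext (Fin.ext (by have h2 := t.2; simp; omega))
  right_inv j := Fin.ext (by simp)

lemma wedgeMk_same (m : M) : wedgeMk R ![m, m] = 0 := by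
  apply Subtype.ext
  show ExteriorAlgebra.ιMulti R 2 ![m, m] = 0
  exact AlternatingMap.map_eq_zero_of_eq _ ![m, m] (by simp) (by decide : (0 : Fin 2) ≠ 1)

lemma wedgeMk_swap (m₁ m₂ : M) : wedgeMk R ![m₂, m₁] = - wedgeMk R ![m₁, m₂] := by
  apply Subtype.ext
  show ExteriorAlgebra.ιMulti R 2 ![m₂, m₁] = -(ExteriorAlgebra.ιMulti R 2 ![m₁, m₂])
  have h := AlternatingMap.map_swap (ExteriorAlgebra.ιMulti R 2) ![m₁, m₂]
      (by decide : (0 : Fin 2) ≠ 1)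
  have he : (![m₁, m₂] ∘ Equiv.swap (0 : Fin 2) 1) = ![m₂, m₁] := by
    funext t
    fin_cases t <;> simp [Equiv.swap_apply_left, Equiv.swap_apply_right]
  rwa [he] at h

lemma SymPow.prod_coord_zero {n : ℕ} (v : Fin n → M) (t : Fin n) (h : v t = 0) :
    SymPow.prod R v = 0 := by
  unfold SymPow.prod
  rw [MultilinearMap.map_coord_zero _ t h, map_zero]

lemma SymPow.prod_smul_univ {n : ℕ} (c : Fin n → R) (v : Fin n → M) :
    SymPow.prod R (fun t => c t • v t) = (∏ t, c t) • SymPow.prod R v := by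
  unfold SymPow.prod
  rw [MultilinearMap.map_smul_univ, map_smul]

end Helpers
theorem stmt8 {R M : Type*} [CommRing R] [AddCommGroup M] [Module R M]
    (b : Module.Basis (Fin 2) R M) (k : ℕ) (hk : 2 ≤ k) (hkeven : Even k)
    (φ : SymPow R 2 (SymPow R k M) →ₗ[R] SymPow R k (⋀[R]^2 M))
    (hφ : ∀ a : Fin 2 → Fin k → M,
      φ (SymPow.prod R ![SymPow.prod R (a 0), SymPow.prod R (a 1)]) =
        ∑ σ : Equiv.Perm (Fin k),
          SymPow.prod R (fun i : Fin k => wedgeMk R ![a 0 i, a 1 (σ i)])) :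
    ∀ i : ℕ, 1 ≤ i → i ≤ k →
      φ (SymPow.prod R
          ![SymPow.prod R (fun t : Fin k => if (t : ℕ) < i then b 0 else b 1),
            SymPow.prod R (fun t : Fin k => if (t : ℕ) < k - i then b 0 else b 1)]) =
        ((-1 : ℤ) ^ (k - i) * (k - i).factorial * i.factorial) •
          SymPow.prod R (fun _ : Fin k => wedgeMk R ![b 0, b 1]) := by
  classical
  intro i hi1 hik
  have key := hφ ![fun t : Fin k => if (t : ℕ) < i then b 0 else b 1,
                   fun t : Fin k => if (t : ℕ) < k - i then b 0 else b 1]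
  simp only [Matrix.cons_val_zero, Matrix.cons_val_one, Matrix.head_cons] at key
  rw [key]
  set w : ⋀[R]^2 M := wedgeMk R ![b 0, b 1] with hw
  set P : SymPow R k (⋀[R]^2 M) := SymPow.prod R (fun _ : Fin k => w) with hP
  set good : Equiv.Perm (Fin k) → Prop :=
    fun σ => ∀ t : Fin k, ((t : ℕ) < i ↔ ¬ ((σ t : ℕ) < k - i)) with hgood
  -- per-term computation
  have hterm : ∀ σ : Equiv.Perm (Fin k),
      SymPow.prod R (fun t : Fin k =>
        wedgeMk R ![if (t : ℕ) < i then b 0 else b 1,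
                    if ((σ t : ℕ)) < k - i then b 0 else b 1]) =
        if good σ then ((-1 : ℤ) ^ (k - i)) • P else 0 := by
    intro σ
    by_cases hg : good σ
    · rw [if_pos hg]
      have hfun : (fun t : Fin k =>
          wedgeMk R ![if (t : ℕ) < i then b 0 else b 1,
                      if ((σ t : ℕ)) < k - i then b 0 else b 1]) =
          fun t : Fin k => (if (t : ℕ) < i then (1 : R) else (-1 : R)) • w := by
        funext t
        by_cases ht : (t : ℕ) < i
        · have h2 : ¬ ((σ t : ℕ) < k - i) := (hg t).mp ht
          rw [if_pos ht, if_neg h2, if_pos ht, one_smul, hw]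
        · have h2 : (σ t : ℕ) < k - i := not_not.mp (fun hh => ht ((hg t).mpr hh))
          rw [if_neg ht, if_pos h2, if_neg ht, hw, wedgeMk_swap]
          exact (neg_one_smul R _).symm
      rw [hfun, SymPow.prod_smul_univ, ← hP]
      have hprod : (∏ t : Fin k, (if (t : ℕ) < i then (1 : R) else (-1 : R))) =
          (-1 : R) ^ (k - i) := by
        rw [Finset.prod_ite, Finset.prod_const_one, one_mul, Finset.prod_const]
        congr 1
        rw [← Fintype.card_subtype, Fintype.card_congr (finGeEquiv k i), Fintype.card_fin]
      rw [hprod]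
      have hcast : (((-1 : ℤ) ^ (k - i) : ℤ) : R) • P = ((-1 : ℤ) ^ (k - i)) • P :=
        Int.cast_smul_eq_zsmul R _ P
      rw [← hcast]
      push_cast
      ring_nf
    · rw [if_neg hg]
      rw [hgood] at hg
      obtain ⟨t, ht⟩ := not_forall.mp hg
      by_cases h1 : (t : ℕ) < i <;> by_cases h2 : (σ t : ℕ) < k - i
      · exact SymPow.prod_coord_zero _ t (by rw [if_pos h1, if_pos h2]; exact wedgeMk_same _)
      · exact absurd (iff_of_true h1 h2) ht
      · exact absurd (iff_of_false h1 (not_not.mpr h2)) ht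
      · exact SymPow.prod_coord_zero _ t
          (by rw [if_neg h1, if_neg h2]; exact wedgeMk_same _)
  calc
    ∑ σ : Equiv.Perm (Fin k),
        SymPow.prod R (fun t : Fin k =>
          wedgeMk R ![if (t : ℕ) < i then b 0 else b 1,
                      if ((σ t : ℕ)) < k - i then b 0 else b 1]) =
        ∑ σ : Equiv.Perm (Fin k), (if good σ then ((-1 : ℤ) ^ (k - i)) • P else 0) :=
      Finset.sum_congr rfl fun σ _ => hterm σ
    _ = (Finset.univ.filter good).card • (((-1 : ℤ) ^ (k - i)) • P) := by
      rw [Finset.sum_ite, Finset.sum_const, Finset.sum_const_zero, add_zero]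
    _ = ((-1 : ℤ) ^ (k - i) * (k - i).factorial * i.factorial) • P := by
      have hcard : (Finset.univ.filter good).card = i.factorial * (k - i).factorial := by
        rw [← Fintype.card_subtype]
        rw [Fintype.card_congr (permIffEquiv (fun t : Fin k => (t : ℕ) < i)
          (fun s : Fin k => ¬ ((s : ℕ) < k - i)))]
        rw [Fintype.card_prod]
        have e₁ : {t : Fin k // (t : ℕ) < i} ≃ {s : Fin k // ¬ ((s : ℕ) < k - i)} :=
          (finLtEquiv k i hik).trans (((finGeEquiv k (k - i)).trans
            (finCongr (by omega))).symm)
        have e₂ : {t : Fin k // ¬ ((t : ℕ) < i)} ≃ {s : Fin k // ¬ ¬ ((s : ℕ) < k - i)} :=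
          (finGeEquiv k i).trans ((finLtEquiv k (k - i) (by omega)).symm.trans
            (Equiv.subtypeEquivRight (fun s => (not_not).symm)))
        rw [Fintype.card_equiv e₁, Fintype.card_equiv e₂]
        rw [Fintype.card_congr (finLtEquiv k i hik), Fintype.card_fin]
        rw [Fintype.card_congr (finGeEquiv k i), Fintype.card_fin]
      rw [hcard, ← natCast_zsmul, smul_smul]
      congr 1
      push_cast
      ring
end

section
/- Let R be a commutative ring with 1 and let M be a free R-module of rank 3. Then the composite φ_{3,2} ∘ φ_{2,3} : Sym²(⋀³M) → Sym²(⋀³M) equals multiplication by 12, i.e. φ_{3,2} ∘ φ_{2,3} = 12 · id_{Sym²(⋀³M)}. (Note 12 = (2+3−1)!/2.) -/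
open scoped TensorProduct

/-! ### Auxiliary definitions -/

/-- The wedge as an alternating map into the exterior power. -/
noncomputable def wedgeAlt (R : Type*) [CommRing R] (n : ℕ) (M : Type*) [AddCommGroup M]
    [Module R M] : M [⋀^Fin n]→ₗ[R] ⋀[R]^n M :=
  (ExteriorAlgebra.ιMulti R n).codRestrict (⋀[R]^n M)
    fun v => ExteriorAlgebra.ιMulti_range R n (Set.mem_range_self v)

lemma wedgeAlt_apply {R : Type*} [CommRing R] {n : ℕ} {M : Type*} [AddCommGroup M]
    [Module R M] (v : Fin n → M) : wedgeAlt R n M v = wedgeMk R v := rfl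

/-- The symmetric product as a multilinear map. -/
noncomputable def prodML (R : Type*) [CommRing R] (n : ℕ) (M : Type*) [AddCommGroup M]
    [Module R M] : MultilinearMap R (fun _ : Fin n => M) (SymPow R n M) :=
  (SymPow.mk R n M).compMultilinearMap (PiTensorProduct.tprod R)

lemma prodML_apply {R : Type*} [CommRing R] {n : ℕ} {M : Type*} [AddCommGroup M]
    [Module R M] (v : Fin n → M) : prodML R n M v = SymPow.prod R v := rfl

/-- Combinatorial sign of a self-map of `Fin 3`. -/
def sgn3 (f : Fin 3 → Fin 3) : ℤ :=
  (((f 1 : ℤ) - f 0) * ((f 2 : ℤ) - f 0) * ((f 2 : ℤ) - f 1)) / 2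

lemma sign_eq_sgn3 (σ : Equiv.Perm (Fin 3)) : (Equiv.Perm.sign σ : ℤ) = sgn3 ⇑σ := by
  revert σ; decide

lemma sgn3_eq_zero {f : Fin 3 → Fin 3} (h : ¬ Function.Injective f) : sgn3 f = 0 := by
  revert h; revert f; decide

lemma alt_comp {R M N : Type*} [CommRing R] [AddCommGroup M] [Module R M] [AddCommGroup N]
    [Module R N] (F : M [⋀^Fin 3]→ₗ[R] N) (v : Fin 3 → M) (f : Fin 3 → Fin 3) :
    F (v ∘ f) = sgn3 f • F v := by
  by_cases h : Function.Injective f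
  · have h1 : v ∘ f = v ∘ (Equiv.ofBijective f (Finite.injective_iff_bijective.mp h)) := rfl
    rw [h1, F.map_perm, Units.smul_def, sign_eq_sgn3]
    rfl
  · rw [sgn3_eq_zero h, zero_smul]
    obtain ⟨i, j, hfij, hij⟩ := Function.not_injective_iff.mp h
    exact F.map_eq_zero_of_eq (v ∘ f) (by simp [Function.comp, hfij]) hij

lemma wedge_mem_span {R M : Type*} [CommRing R] [AddCommGroup M] [Module R M]
    (b : Module.Basis (Fin 3) R M) (v : Fin 3 → M) :
    wedgeMk R v ∈ Submodule.span R {wedgeMk R ⇑b} := by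
  have hv : wedgeMk R v = (wedgeAlt R 3 M).toMultilinearMap
      (fun i => ∑ j, b.repr (v i) j • b j) := by
    show wedgeMk R v = wedgeMk R (fun i => ∑ j, b.repr (v i) j • b j)
    congr 1
    funext i
    exact (b.sum_repr (v i)).symm
  rw [hv, MultilinearMap.map_sum]
  refine Submodule.sum_mem _ fun r _ => ?_
  rw [(wedgeAlt R 3 M).toMultilinearMap.map_smul_univ (fun i => b.repr (v i) (r i))
    (fun i => b (r i))]
  refine Submodule.smul_mem _ _ ?_
  rw [show (wedgeAlt R 3 M).toMultilinearMap (fun i => b (r i)) = wedgeAlt R 3 M (⇑b ∘ r)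
    from rfl, alt_comp, ← Int.cast_smul_eq_zsmul R]
  exact Submodule.smul_mem _ _ (by rw [wedgeAlt_apply]; exact Submodule.mem_span_singleton_self _)

lemma exists_rep {R M : Type*} [CommRing R] [AddCommGroup M] [Module R M]
    (b : Module.Basis (Fin 3) R M) (x : ⋀[R]^3 M) : ∃ r : R, x = r • wedgeMk R ⇑b := by
  have hx : (x : ExteriorAlgebra R M) ∈
      Submodule.span R (Set.range (ExteriorAlgebra.ιMulti R 3)) := by
    rw [ExteriorAlgebra.ιMulti_span_fixedDegree]; exact x.2
  have hmap : (x : ExteriorAlgebra R M) ∈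
      Submodule.map (⋀[R]^3 M).subtype (Submodule.span R {wedgeMk R ⇑b}) := by
    refine Submodule.span_le.mpr ?_ hx
    rintro _ ⟨v, rfl⟩
    exact ⟨wedgeMk R v, wedge_mem_span b v, rfl⟩
  obtain ⟨y, hy, hxy⟩ := hmap
  obtain ⟨r, rfl⟩ := Submodule.mem_span_singleton.mp hy
  exact ⟨r, Subtype.coe_injective hxy.symm⟩

def gfun (τ : Equiv.Perm (Fin 3)) (p : Equiv.Perm (Fin 2) × Equiv.Perm (Fin 2)) (i : Fin 2) :
    Fin 3 → Fin 3 :=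
  ![![0, τ 0] i, ![1, τ 1] (p.1 i), ![2, τ 2] (p.2 i)]

lemma sum_sgn : ∑ τ : Equiv.Perm (Fin 3), ∑ p : Equiv.Perm (Fin 2) × Equiv.Perm (Fin 2),
    (Equiv.Perm.sign τ : ℤ) * (sgn3 (gfun τ p 0) * sgn3 (gfun τ p 1)) = 12 := by decide

lemma prod_smul2 {R N : Type*} [CommRing R] [AddCommGroup N] [Module R N] (r s : R) (x y : N) :
    SymPow.prod R ![r • x, s • y] = (r * s) • SymPow.prod R ![x, y] := by
  have h : (![r • x, s • y] : Fin 2 → N) = fun i => ![r, s] i • ![x, y] i := by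
    funext i; fin_cases i <;> rfl
  rw [← prodML_apply, h, (prodML R 2 N).map_smul_univ, Fin.prod_univ_two]
  rfl

theorem stmt10 {R M : Type*} [CommRing R] [AddCommGroup M] [Module R M]
    (b : Module.Basis (Fin 3) R M)
    (φ₁ : SymPow R 2 (⋀[R]^3 M) →ₗ[R] SymPow R 3 (SymPow R 2 M))
    (hφ₁ : ∀ a : Fin 2 → Fin 3 → M,
      φ₁ (SymPow.prod R ![wedgeMk R (a 0), wedgeMk R (a 1)]) =
        ∑ τ : Equiv.Perm (Fin 3),
          (Equiv.Perm.sign τ : ℤ) •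
            SymPow.prod R (fun i : Fin 3 => SymPow.prod R ![a 0 i, a 1 (τ i)]))
    (φ₂ : SymPow R 3 (SymPow R 2 M) →ₗ[R] SymPow R 2 (⋀[R]^3 M))
    (hφ₂ : ∀ a : Fin 3 → Fin 2 → M,
      φ₂ (SymPow.prod R fun j : Fin 3 => SymPow.prod R (a j)) =
        ∑ p : Equiv.Perm (Fin 2) × Equiv.Perm (Fin 2),
          SymPow.prod R (fun i : Fin 2 => wedgeMk R ![a 0 i, a 1 (p.1 i), a 2 (p.2 i)])) :
    φ₂ ∘ₗ φ₁ = (12 : ℕ) • LinearMap.id := by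
  have key : φ₂ (φ₁ (SymPow.prod R ![wedgeMk R ⇑b, wedgeMk R ⇑b])) =
      (12 : ℕ) • SymPow.prod R ![wedgeMk R ⇑b, wedgeMk R ⇑b] := by
    set e := wedgeMk R ⇑b with he
    set E := SymPow.prod R ![e, e] with hE
    have h1 := hφ₁ ![⇑b, ⇑b]
    simp only [Matrix.cons_val_zero, Matrix.cons_val_one, Matrix.head_cons] at h1
    rw [h1, map_sum]
    have hterm : ∀ τ : Equiv.Perm (Fin 3),
        φ₂ ((Equiv.Perm.sign τ : ℤ) • SymPow.prod R
          (fun i : Fin 3 => SymPow.prod R ![b i, b (τ i)]))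
        = ((∑ p : Equiv.Perm (Fin 2) × Equiv.Perm (Fin 2),
            (Equiv.Perm.sign τ : ℤ) * (sgn3 (gfun τ p 0) * sgn3 (gfun τ p 1)) : ℤ) : R) • E := by
      intro τ
      have h2 := hφ₂ (fun j => ![b j, b (τ j)])
      have h3 : ∀ (p : Equiv.Perm (Fin 2) × Equiv.Perm (Fin 2)) (i : Fin 2),
          wedgeMk R ![(![b 0, b (τ 0)] : Fin 2 → M) i, (![b 1, b (τ 1)] : Fin 2 → M) (p.1 i),
            (![b 2, b (τ 2)] : Fin 2 → M) (p.2 i)] = ((sgn3 (gfun τ p i) : ℤ) : R) • e := by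
        intro p i
        have hpair : ∀ (u w : Fin 3) (k : Fin 2),
            (![b u, b w] : Fin 2 → M) k = b ((![u, w] : Fin 2 → Fin 3) k) := by
          intro u w k; fin_cases k <;> rfl
        have harg : (![(![b 0, b (τ 0)] : Fin 2 → M) i, (![b 1, b (τ 1)] : Fin 2 → M) (p.1 i),
            (![b 2, b (τ 2)] : Fin 2 → M) (p.2 i)] : Fin 3 → M) = ⇑b ∘ gfun τ p i := by
          funext j
          fin_cases j
          · exact hpair 0 (τ 0) i
          · exact hpair 1 (τ 1) (p.1 i)
          · exact hpair 2 (τ 2) (p.2 i)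
        rw [harg, ← wedgeAlt_apply, alt_comp, ← Int.cast_smul_eq_zsmul R, wedgeAlt_apply]
      have h4 : ∀ p : Equiv.Perm (Fin 2) × Equiv.Perm (Fin 2),
          SymPow.prod R (fun i : Fin 2 => ((sgn3 (gfun τ p i) : ℤ) : R) • e)
          = ((sgn3 (gfun τ p 0) * sgn3 (gfun τ p 1) : ℤ) : R) • E := by
        intro p
        have h5 := (prodML R 2 (⋀[R]^3 M)).map_smul_univ
          (fun i => ((sgn3 (gfun τ p i) : ℤ) : R)) (fun _ => e)
        rw [← prodML_apply, h5, Fin.prod_univ_two,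
          show ((fun _ : Fin 2 => e) : Fin 2 → _) = ![e, e] from
            by funext i; fin_cases i <;> rfl,
          prodML_apply, ← hE, ← Int.cast_mul]
      rw [map_zsmul, h2]
      rw [show (∑ p : Equiv.Perm (Fin 2) × Equiv.Perm (Fin 2),
          SymPow.prod R (fun i : Fin 2 => wedgeMk R
            ![(![b 0, b (τ 0)] : Fin 2 → M) i, (![b 1, b (τ 1)] : Fin 2 → M) (p.1 i),
              (![b 2, b (τ 2)] : Fin 2 → M) (p.2 i)]))
          = ∑ p : Equiv.Perm (Fin 2) × Equiv.Perm (Fin 2),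
            ((sgn3 (gfun τ p 0) * sgn3 (gfun τ p 1) : ℤ) : R) • E from
        Finset.sum_congr rfl fun p _ => by
          rw [show (fun i : Fin 2 => wedgeMk R
              ![(![b 0, b (τ 0)] : Fin 2 → M) i, (![b 1, b (τ 1)] : Fin 2 → M) (p.1 i),
                (![b 2, b (τ 2)] : Fin 2 → M) (p.2 i)])
              = fun i : Fin 2 => ((sgn3 (gfun τ p i) : ℤ) : R) • e from
            funext fun i => h3 p i]
          exact h4 p]
      rw [Finset.smul_sum]
      simp only [← Int.cast_smul_eq_zsmul R, smul_smul, ← Int.cast_mul, ← Finset.sum_smul,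
        Int.cast_sum]
    rw [Finset.sum_congr rfl fun τ _ => hterm τ, ← Finset.sum_smul, ← Int.cast_sum, sum_sgn]
    rw [Int.cast_smul_eq_zsmul, show (12:ℤ) = ((12:ℕ):ℤ) from rfl, natCast_zsmul]
  refine Submodule.linearMap_qext _ (PiTensorProduct.ext (MultilinearMap.ext fun v => ?_))
  obtain ⟨r, hr⟩ := exists_rep b (v 0)
  obtain ⟨s, hs⟩ := exists_rep b (v 1)
  have hv : v = ![r • wedgeMk R ⇑b, s • wedgeMk R ⇑b] := by
    funext i; fin_cases i
    · exact hr
    · exact hs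
  show φ₂ (φ₁ (SymPow.prod R v)) = (12 : ℕ) • SymPow.prod R v
  rw [hv, prod_smul2, map_smul, map_smul, key, smul_comm]
end
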